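/- arXiv:2006.07052 — 8 statements merged into one kernel-verified Lean document; each statement's English description precedes it below -/
import Mathlib

section
/- For any positive reals ξ₁, ξ₂₁, ξ₂₂, c with ξ₂₂ ≤ 1, the integral over γ ∈ (0,1) of (1-γ)^{ξ₂₁-1} γ^{ξ₁-1} (1 - (c/(1+c))γ)^{ξ₂₂} is at least B(ξ₂₁+ξ₂₂, ξ₁) · [1 + (Γ(ξ₂₁)Γ(ξ₂₁+ξ₂₂+ξ₁)/(Γ(ξ₂₁+ξ₂₂)Γ(ξ₂₁+ξ₁)) − 1) · 1/(1+c)]. -/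
open MeasureTheory Set Real

lemma beta_integrable (a b : ℝ) (ha : 0 < a) (hb : 0 < b) :
    IntegrableOn (fun x : ℝ => x ^ (a - 1) * (1 - x) ^ (b - 1)) (Set.Ioo 0 1) := by
  have h := Complex.betaIntegral_convergent (u := (a : ℂ)) (v := (b : ℂ))
    (by simpa using ha) (by simpa using hb)
  have h1 : IntegrableOn (fun x : ℝ => (x : ℂ) ^ ((a : ℂ) - 1) * (1 - (x : ℂ)) ^ ((b : ℂ) - 1))
      (Set.Ioo 0 1) := by
    have := (intervalIntegrable_iff_integrableOn_Ioc_of_le (by norm_num : (0:ℝ) ≤ 1)).mp h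
    exact this.mono_set Set.Ioo_subset_Ioc_self
  have h2 : IntegrableOn
      (fun x : ℝ => ‖(x : ℂ) ^ ((a : ℂ) - 1) * (1 - (x : ℂ)) ^ ((b : ℂ) - 1)‖)
      (Set.Ioo 0 1) := h1.norm
  refine h2.congr_fun (fun x hx => ?_) measurableSet_Ioo
  have hx0 : (0:ℝ) < x := hx.1
  have hx1 : (0:ℝ) < 1 - x := by linarith [hx.2]
  simp only [norm_mul]
  rw [show ((a : ℂ) - 1) = ((a - 1 : ℝ) : ℂ) by push_cast; ring,
      show ((b : ℂ) - 1) = ((b - 1 : ℝ) : ℂ) by push_cast; ring,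
      show (1 - (x : ℂ)) = ((1 - x : ℝ) : ℂ) by push_cast; ring]
  rw [Complex.norm_cpow_eq_rpow_re_of_pos hx0, Complex.norm_cpow_eq_rpow_re_of_pos hx1]
  simp

lemma beta_value (a b : ℝ) (ha : 0 < a) (hb : 0 < b) :
    ∫ x in Set.Ioo (0:ℝ) 1, x ^ (a - 1) * (1 - x) ^ (b - 1)
      = Real.Gamma a * Real.Gamma b / Real.Gamma (a + b) := by
  have hab : Real.Gamma (a + b) ≠ 0 := (Real.Gamma_pos_of_pos (by linarith)).ne'
  have hbeta : Complex.betaIntegral a b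
      = ((Real.Gamma a * Real.Gamma b / Real.Gamma (a + b) : ℝ) : ℂ) := by
    have h := Complex.Gamma_mul_Gamma_eq_betaIntegral (s := (a:ℂ)) (t := (b:ℂ))
      (by simpa using ha) (by simpa using hb)
    rw [show ((a:ℂ) + b) = ((a + b : ℝ) : ℂ) by push_cast; ring] at h
    rw [Complex.Gamma_ofReal, Complex.Gamma_ofReal, Complex.Gamma_ofReal] at h
    have hab' : ((Real.Gamma (a+b) : ℝ) : ℂ) ≠ 0 := by exact_mod_cast hab
    field_simp at h ⊢
    push_cast; rw [eq_div_iff hab', h]; ring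
  have key : ((∫ x in Set.Ioo (0:ℝ) 1, x ^ (a - 1) * (1 - x) ^ (b - 1) : ℝ) : ℂ)
      = Complex.betaIntegral a b := by
    rw [Complex.betaIntegral, intervalIntegral.integral_of_le (by norm_num : (0:ℝ) ≤ 1),
      MeasureTheory.integral_Ioc_eq_integral_Ioo]
    refine integral_ofReal.symm.trans <| setIntegral_congr_fun measurableSet_Ioo (fun x hx => ?_)
    have hx0 : (0:ℝ) ≤ x := hx.1.le
    have hx1 : (0:ℝ) ≤ 1 - x := by linarith [hx.2.le]
    have cc : ∀ r : ℝ, Complex.ofReal r = @RCLike.ofReal ℂ _ r := fun r => rfl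
    rw [← cc]
    rw [show ((a : ℂ) - 1) = ((a - 1 : ℝ) : ℂ) by push_cast; ring,
        show ((b : ℂ) - 1) = ((b - 1 : ℝ) : ℂ) by push_cast; ring,
        show (1 - (x : ℂ)) = ((1 - x : ℝ) : ℂ) by push_cast; ring,
        ← Complex.ofReal_cpow hx0, ← Complex.ofReal_cpow hx1]
    push_cast
    ring
  exact Complex.ofReal_injective (key.trans hbeta)

theorem stmt_1 (ξ₁ ξ₂₁ ξ₂₂ c : ℝ) (hξ₁ : 0 < ξ₁) (hξ₂₁ : 0 < ξ₂₁) (hξ₂₂ : 0 < ξ₂₂)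
    (hc : 0 < c) (hle : ξ₂₂ ≤ 1) :
    ∫ γ in Set.Ioo (0:ℝ) 1, (1 - γ) ^ (ξ₂₁ - 1) * γ ^ (ξ₁ - 1) * (1 - (c / (1 + c)) * γ) ^ ξ₂₂
      ≥ (Real.Gamma (ξ₂₁ + ξ₂₂) * Real.Gamma ξ₁ / Real.Gamma (ξ₂₁ + ξ₂₂ + ξ₁)) *
        (1 + (Real.Gamma ξ₂₁ * Real.Gamma (ξ₂₁ + ξ₂₂ + ξ₁)
              / (Real.Gamma (ξ₂₁ + ξ₂₂) * Real.Gamma (ξ₂₁ + ξ₁)) - 1) * (1 / (1 + c))) := by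
  have h1c : (0:ℝ) < 1 + c := by linarith
  set t : ℝ := c / (1 + c) with ht_def
  set s : ℝ := 1 / (1 + c) with hs_def
  have hts : t + s = 1 := by rw [ht_def, hs_def]; field_simp; ring
  have ht0 : 0 < t := by positivity
  have hs0 : 0 < s := by positivity
  have ht1 : t < 1 := by
    rw [ht_def, div_lt_one h1c]; linarith
  -- Gamma positivity
  have hG1 : 0 < Real.Gamma (ξ₂₁ + ξ₂₂) := Real.Gamma_pos_of_pos (by linarith)
  have hG2 : 0 < Real.Gamma (ξ₂₁ + ξ₂₂ + ξ₁) := Real.Gamma_pos_of_pos (by linarith)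
  have hG3 : 0 < Real.Gamma (ξ₂₁ + ξ₁) := Real.Gamma_pos_of_pos (by linarith)
  have hG4 : 0 < Real.Gamma ξ₂₁ := Real.Gamma_pos_of_pos hξ₂₁
  have hG5 : 0 < Real.Gamma ξ₁ := Real.Gamma_pos_of_pos hξ₁
  -- rewrite RHS as t * B1 + s * B2
  have hRHS : (Real.Gamma (ξ₂₁ + ξ₂₂) * Real.Gamma ξ₁ / Real.Gamma (ξ₂₁ + ξ₂₂ + ξ₁)) *
        (1 + (Real.Gamma ξ₂₁ * Real.Gamma (ξ₂₁ + ξ₂₂ + ξ₁)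
              / (Real.Gamma (ξ₂₁ + ξ₂₂) * Real.Gamma (ξ₂₁ + ξ₁)) - 1) * (1 / (1 + c)))
      = t * (Real.Gamma ξ₁ * Real.Gamma (ξ₂₁ + ξ₂₂) / Real.Gamma (ξ₁ + (ξ₂₁ + ξ₂₂)))
        + s * (Real.Gamma ξ₁ * Real.Gamma ξ₂₁ / Real.Gamma (ξ₁ + ξ₂₁)) := by
    rw [show ξ₁ + (ξ₂₁ + ξ₂₂) = ξ₂₁ + ξ₂₂ + ξ₁ by ring, show ξ₁ + ξ₂₁ = ξ₂₁ + ξ₁ by ring,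
      ht_def, hs_def]
    field_simp
    ring
  rw [hRHS, ← beta_value ξ₁ (ξ₂₁ + ξ₂₂) hξ₁ (by positivity), ← beta_value ξ₁ ξ₂₁ hξ₁ hξ₂₁]
  have hI1 := beta_integrable ξ₁ (ξ₂₁ + ξ₂₂) hξ₁ (by positivity)
  have hI2 := beta_integrable ξ₁ ξ₂₁ hξ₁ hξ₂₁
  rw [← integral_const_mul, ← integral_const_mul, ← integral_add (hI1.const_mul t) (hI2.const_mul s)]
  -- now an integral comparison
  refine setIntegral_mono_on ((hI1.const_mul t).add (hI2.const_mul s)) ?_ measurableSet_Ioo ?_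
  · -- integrability of LHS integrand
    refine Integrable.mono' (g := fun γ : ℝ => γ ^ (ξ₁ - 1) * (1 - γ) ^ (ξ₂₁ - 1)) hI2 ?_ ?_
    · refine ContinuousOn.aestronglyMeasurable ?_ measurableSet_Ioo
      have c1 : ContinuousOn (fun γ : ℝ => (1 - γ) ^ (ξ₂₁ - 1)) (Set.Ioo 0 1) :=
        ContinuousOn.rpow_const (continuous_const.sub continuous_id).continuousOn
          (fun x hx => Or.inl (by simp only [Set.mem_Ioo] at hx; intro h; nlinarith [hx.2]))
      have c2 : ContinuousOn (fun γ : ℝ => γ ^ (ξ₁ - 1)) (Set.Ioo 0 1) :=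
        ContinuousOn.rpow_const continuous_id.continuousOn
          (fun x hx => Or.inl (by simp only [Set.mem_Ioo, id] at hx ⊢; exact hx.1.ne'))
      have c3 : ContinuousOn (fun γ : ℝ => (1 - t * γ) ^ ξ₂₂) (Set.Ioo 0 1) :=
        ContinuousOn.rpow_const (continuous_const.sub (continuous_const.mul continuous_id)).continuousOn
          (fun x hx => Or.inr hξ₂₂.le)
      exact (c1.mul c2).mul c3
    · refine (ae_restrict_iff' measurableSet_Ioo).2 (Filter.Eventually.of_forall fun γ hγ => ?_)
      obtain ⟨hγ0, hγ1⟩ := hγ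
      have h1γ : 0 < 1 - γ := by linarith
      have htγ : 0 < 1 - t * γ := by nlinarith
      have htγ1 : 1 - t * γ ≤ 1 := by nlinarith
      have hb1 : (1 - t * γ) ^ ξ₂₂ ≤ 1 := Real.rpow_le_one htγ.le htγ1 hξ₂₂.le
      rw [Real.norm_eq_abs, abs_of_nonneg (by positivity)]
      calc (1 - γ) ^ (ξ₂₁ - 1) * γ ^ (ξ₁ - 1) * (1 - t * γ) ^ ξ₂₂
          ≤ (1 - γ) ^ (ξ₂₁ - 1) * γ ^ (ξ₁ - 1) * 1 := by
            apply mul_le_mul_of_nonneg_left hb1 (by positivity)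
        _ = γ ^ (ξ₁ - 1) * (1 - γ) ^ (ξ₂₁ - 1) := by ring
  · -- pointwise inequality
    intro γ hγ
    obtain ⟨hγ0, hγ1⟩ := hγ
    have h1γ : 0 < 1 - γ := by linarith
    have hsplit : (1 - γ) ^ (ξ₂₁ + ξ₂₂ - 1) = (1 - γ) ^ (ξ₂₁ - 1) * (1 - γ) ^ ξ₂₂ := by
      rw [← Real.rpow_add h1γ]; ring_nf
    have hconc : t * (1 - γ) ^ ξ₂₂ + s * 1 ≤ (1 - t * γ) ^ ξ₂₂ := by
      have h := (Real.concaveOn_rpow hξ₂₂.le hle).2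
        (x := 1 - γ) (Set.mem_Ici.2 h1γ.le) (y := 1) (Set.mem_Ici.2 zero_le_one)
        ht0.le hs0.le hts
      simp only [smul_eq_mul, Real.one_rpow] at h
      calc t * (1 - γ) ^ ξ₂₂ + s * 1 ≤ (t * (1 - γ) + s * 1) ^ ξ₂₂ := h
        _ = (1 - t * γ) ^ ξ₂₂ := by rw [show t * (1 - γ) + s * 1 = 1 - t * γ by
              have : s = 1 - t := by linarith
              rw [this]; ring]
    calc t * (γ ^ (ξ₁ - 1) * (1 - γ) ^ (ξ₂₁ + ξ₂₂ - 1)) + s * (γ ^ (ξ₁ - 1) * (1 - γ) ^ (ξ₂₁ - 1))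
        = (1 - γ) ^ (ξ₂₁ - 1) * γ ^ (ξ₁ - 1) * (t * (1 - γ) ^ ξ₂₂ + s * 1) := by
          rw [hsplit]; ring
      _ ≤ (1 - γ) ^ (ξ₂₁ - 1) * γ ^ (ξ₁ - 1) * (1 - t * γ) ^ ξ₂₂ := by
          apply mul_le_mul_of_nonneg_left hconc (by positivity)
end

section
/- For any positive reals ξ₁, ξ₂₁, ξ₂₂, c with ξ₂₂ > 1, the integral over γ ∈ (0,1) of (1-γ)^{ξ₂₁-1} γ^{ξ₁-1} (1 - (c/(1+c))γ)^{ξ₂₂} is at least B(ξ₂₁+ξ₂₂, ξ₁) · (1 + (ξ₁/(ξ₂₁+ξ₂₂−1)) · 1/(1+c))^{ξ₂₂}, provided ξ₂₁ + ξ₂₂ > 1. -/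
open MeasureTheory Set Real
open scoped ENNReal

lemma beta_cpow_eq {u v : ℝ} {x : ℝ} (hx0 : 0 ≤ x) (hx1 : x ≤ 1) :
    (x:ℂ) ^ ((u:ℂ) - 1) * ((1:ℂ) - x) ^ ((v:ℂ) - 1)
      = ((x ^ (u-1) * (1-x) ^ (v-1) : ℝ) : ℂ) := by
  have h1 : ((u:ℂ) - 1) = ((u - 1 : ℝ) : ℂ) := by push_cast; ring
  have h2 : ((v:ℂ) - 1) = ((v - 1 : ℝ) : ℂ) := by push_cast; ring
  have h3 : ((1:ℂ) - x) = (((1 - x : ℝ)) : ℂ) := by push_cast; ring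
  rw [h1, h2, h3, ← Complex.ofReal_cpow hx0, ← Complex.ofReal_cpow (by linarith)]
  push_cast; ring

lemma beta_integrableOn {u v : ℝ} (hu : 0 < u) (hv : 0 < v) :
    IntegrableOn (fun x : ℝ => x ^ (u - 1) * (1 - x) ^ (v - 1)) (Set.Ioo 0 1) := by
  have h := Complex.betaIntegral_convergent (u := u) (v := v) (by simpa using hu) (by simpa using hv)
  have h2 : IntegrableOn (fun x : ℝ => (x:ℂ) ^ ((u:ℂ) - 1) * ((1:ℂ) - x) ^ ((v:ℂ) - 1))
      (Set.Ioc 0 1) := (intervalIntegrable_iff_integrableOn_Ioc_of_le zero_le_one).mp h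
  have h3 : IntegrableOn (fun x : ℝ => ((x:ℂ) ^ ((u:ℂ) - 1) * ((1:ℂ) - x) ^ ((v:ℂ) - 1)).re) (Set.Ioc 0 1) := h2.re
  refine ((h3.mono_set Ioo_subset_Ioc_self).congr_fun ?_ measurableSet_Ioo)
  intro x hx
  have h4 := beta_cpow_eq (u:=u) (v:=v) hx.1.le hx.2.le
  simp only [h4, Complex.ofReal_re]

lemma beta_integral_value {u v : ℝ} (hu : 0 < u) (hv : 0 < v) :
    ∫ x in Set.Ioo (0:ℝ) 1, x ^ (u - 1) * (1 - x) ^ (v - 1) =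
      Real.Gamma u * Real.Gamma v / Real.Gamma (u + v) := by
  have key := Complex.Gamma_mul_Gamma_eq_betaIntegral (s := (u:ℂ)) (t := (v:ℂ))
    (by simpa using hu) (by simpa using hv)
  have hbeta : Complex.betaIntegral u v
      = ((∫ x in Set.Ioo (0:ℝ) 1, x ^ (u-1) * (1-x) ^ (v-1) : ℝ) : ℂ) := by
    rw [Complex.betaIntegral]
    rw [intervalIntegral.integral_of_le zero_le_one]
    rw [show (∫ x in Set.Ioo (0:ℝ) 1, x ^ (u-1) * (1-x) ^ (v-1)) = ∫ x in Set.Ioc (0:ℝ) 1, x ^ (u-1) * (1-x) ^ (v-1) from (MeasureTheory.integral_Ioc_eq_integral_Ioo).symm]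
    have hcong : ∫ x in Set.Ioc (0:ℝ) 1, (x:ℂ) ^ ((u:ℂ) - 1) * ((1:ℂ) - x) ^ ((v:ℂ) - 1)
        = ∫ x in Set.Ioc (0:ℝ) 1, ((x ^ (u-1) * (1-x) ^ (v-1) : ℝ) : ℂ) :=
      setIntegral_congr_fun measurableSet_Ioc (fun x hx => beta_cpow_eq hx.1.le hx.2)
    rw [hcong]; exact integral_ofReal
  rw [hbeta, Complex.Gamma_ofReal, Complex.Gamma_ofReal, ← Complex.ofReal_add,
    Complex.Gamma_ofReal] at key
  have hne : Real.Gamma (u + v) ≠ 0 := (Real.Gamma_pos_of_pos (by linarith)).ne'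
  have := key
  rw [← Complex.ofReal_mul, ← Complex.ofReal_mul] at this
  have h2 : Real.Gamma u * Real.Gamma v
      = Real.Gamma (u + v) * ∫ x in Set.Ioo (0:ℝ) 1, x ^ (u-1) * (1-x) ^ (v-1) := by
    exact_mod_cast this
  field_simp
  linarith [h2]

theorem stmt_2 (ξ₁ ξ₂₁ ξ₂₂ c : ℝ) (hξ₁ : 0 < ξ₁) (hξ₂₁ : 0 < ξ₂₁)
    (hc : 0 < c) (hgt : 1 < ξ₂₂) :
    ∫ γ in Set.Ioo (0:ℝ) 1, (1 - γ) ^ (ξ₂₁ - 1) * γ ^ (ξ₁ - 1) * (1 - (c / (1 + c)) * γ) ^ ξ₂₂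
      ≥ (Real.Gamma (ξ₂₁ + ξ₂₂) * Real.Gamma ξ₁ / Real.Gamma (ξ₂₁ + ξ₂₂ + ξ₁)) *
        (1 + (ξ₁ / (ξ₂₁ + ξ₂₂ - 1)) * (1 / (1 + c))) ^ ξ₂₂ := by
  have hp0 : (0:ℝ) < ξ₂₂ := by linarith
  have hpne : ξ₂₂ ≠ 0 := hp0.ne'
  have hcpos : (0:ℝ) < 1 + c := by linarith
  set s : ℝ := ξ₂₁ + ξ₂₂ with hs_def
  set a : ℝ := c / (1 + c) with ha_def
  set b : ℝ := 1 / (1 + c) with hb_def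
  have hs1 : 1 < s := by rw [hs_def]; linarith
  have hs0 : 0 < s := by linarith
  have hsm1 : 0 < s - 1 := by linarith
  have hb : 0 < b := by rw [hb_def]; positivity
  have hab : a + b = 1 := by rw [ha_def, hb_def]; field_simp; ring
  have ha0 : 0 < a := by rw [ha_def]; positivity
  have ha1 : a < 1 := by linarith
  clear_value s a b
  set q : ℝ := Real.conjExponent ξ₂₂ with hq_def
  have hq : ξ₂₂.HolderConjugate q := Real.HolderConjugate.conjExponent hgt
  have hq0 : 0 < q := hq.symm.pos
  have hconj : 1 / ξ₂₂ + 1 / q = 1 := by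
    rw [one_div, one_div]; exact hq.inv_add_inv_eq_one
  clear_value q
  -- the functions
  set F : ℝ → ℝ := fun γ => (1 - γ) ^ (ξ₂₁ - 1) * γ ^ (ξ₁ - 1) * (1 - a * γ) ^ ξ₂₂ with hF_def
  set G : ℝ → ℝ := fun γ => γ ^ (ξ₁ - 1) * (1 - γ) ^ (s - 1) with hG_def
  set K : ℝ → ℝ := fun γ => γ ^ (ξ₁ + 1 - 1) * (1 - γ) ^ (s - 1 - 1) with hK_def
  set H : ℝ → ℝ := fun γ => G γ + b * K γ with hH_def
  set μ : Measure ℝ := volume.restrict (Set.Ioo 0 1) with hμ_def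
  -- pointwise nonnegativity on Ioo
  have hFnn' : ∀ γ ∈ Set.Ioo (0:ℝ) 1, 0 ≤ F γ := by
    intro γ hγ
    obtain ⟨hγ0, hγ1⟩ := hγ
    have h1 : (0:ℝ) ≤ 1 - γ := by linarith
    have h2 : (0:ℝ) ≤ 1 - a * γ := by nlinarith
    exact mul_nonneg (mul_nonneg (Real.rpow_nonneg h1 _) (Real.rpow_nonneg hγ0.le _))
      (Real.rpow_nonneg h2 _)
  have hGnn' : ∀ γ ∈ Set.Ioo (0:ℝ) 1, 0 ≤ G γ := by
    intro γ hγ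
    obtain ⟨hγ0, hγ1⟩ := hγ
    exact mul_nonneg (Real.rpow_nonneg hγ0.le _) (Real.rpow_nonneg (by linarith) _)
  have hKnn' : ∀ γ ∈ Set.Ioo (0:ℝ) 1, 0 ≤ K γ := by
    intro γ hγ
    obtain ⟨hγ0, hγ1⟩ := hγ
    exact mul_nonneg (Real.rpow_nonneg hγ0.le _) (Real.rpow_nonneg (by linarith) _)
  have hHnn' : ∀ γ ∈ Set.Ioo (0:ℝ) 1, 0 ≤ H γ := by
    intro γ hγ
    have h1 := hGnn' γ hγ
    have h2 : 0 ≤ b * K γ := mul_nonneg hb.le (hKnn' γ hγ)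
    simp only [hH_def]
    linarith
  -- measurability
  have hFm : Measurable F := by fun_prop
  have hGm : Measurable G := by fun_prop
  -- integrability
  have hGint : IntegrableOn G (Set.Ioo 0 1) := beta_integrableOn hξ₁ hs0
  have hKint : IntegrableOn K (Set.Ioo 0 1) := beta_integrableOn (by linarith) hsm1
  have hHint : IntegrableOn H (Set.Ioo 0 1) := hGint.add (hKint.const_mul b)
  have hFint : IntegrableOn F (Set.Ioo 0 1) := by
    refine Integrable.mono' (beta_integrableOn hξ₁ hξ₂₁) hFm.aestronglyMeasurable ?_
    filter_upwards [ae_restrict_mem measurableSet_Ioo] with γ hγ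
    obtain ⟨hγ0, hγ1⟩ := hγ
    have hw : (0:ℝ) ≤ 1 - γ := by linarith
    have hr0 : (0:ℝ) ≤ 1 - a * γ := by nlinarith
    have h1 : (1 - a * γ) ^ ξ₂₂ ≤ 1 := Real.rpow_le_one hr0 (by nlinarith) hp0.le
    rw [Real.norm_of_nonneg (hFnn' γ ⟨hγ0, hγ1⟩)]
    simp only [hF_def]
    calc (1 - γ) ^ (ξ₂₁ - 1) * γ ^ (ξ₁ - 1) * (1 - a * γ) ^ ξ₂₂
        ≤ (1 - γ) ^ (ξ₂₁ - 1) * γ ^ (ξ₁ - 1) * 1 := by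
          apply mul_le_mul_of_nonneg_left h1
          exact mul_nonneg (Real.rpow_nonneg hw _) (Real.rpow_nonneg hγ0.le _)
      _ = γ ^ (ξ₁ - 1) * (1 - γ) ^ (ξ₂₁ - 1) := by ring
  -- pointwise Hölder factorization
  have hpt : ∀ γ ∈ Set.Ioo (0:ℝ) 1, H γ = (F γ) ^ (1/ξ₂₂) * (G γ) ^ (1/q) := by
    intro γ hγ
    obtain ⟨hγ0, hγ1⟩ := hγ
    have hw : (0:ℝ) < 1 - γ := by linarith
    have hr : (0:ℝ) < 1 - a * γ := by nlinarith
    have hGpos : 0 < G γ := by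
      simp only [hG_def]
      exact mul_pos (Real.rpow_pos_of_pos hγ0 _) (Real.rpow_pos_of_pos hw _)
    set R : ℝ := (1 - a * γ) / (1 - γ) with hR_def
    have hR : 0 < R := by rw [hR_def]; positivity
    have hFG : F γ = G γ * R ^ ξ₂₂ := by
      simp only [hF_def, hG_def, hR_def]
      rw [Real.div_rpow hr.le hw.le]
      rw [show s - 1 = (ξ₂₁ - 1) + ξ₂₂ by rw [hs_def]; ring]
      rw [Real.rpow_add hw]
      have hwp : (0:ℝ) < (1 - γ) ^ ξ₂₂ := Real.rpow_pos_of_pos hw _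
      field_simp
    have hHG : H γ = G γ * R := by
      simp only [hH_def, hG_def, hK_def, hR_def]
      have e1 : (1 - γ) ^ (s - 1) = (1 - γ) ^ (s - 1 - 1) * (1 - γ) := by
        rw [← Real.rpow_add_one hw.ne' (s - 1 - 1)]; ring_nf
      have e2 : γ ^ (ξ₁ + 1 - 1) = γ ^ (ξ₁ - 1) * γ := by
        rw [← Real.rpow_add_one hγ0.ne' (ξ₁ - 1)]; ring_nf
      have hba : b = 1 - a := by linarith
      rw [e1, e2, hba]
      field_simp
      ring
    rw [hFG, hHG]
    rw [Real.mul_rpow hGpos.le (Real.rpow_nonneg hR.le _)]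
    have h1 : (R ^ ξ₂₂) ^ (1/ξ₂₂) = R := by
      rw [← Real.rpow_mul hR.le, mul_one_div_cancel hpne, Real.rpow_one]
    have h2 : G γ ^ (1/ξ₂₂) * G γ ^ (1/q) = G γ := by
      rw [← Real.rpow_add hGpos, hconj, Real.rpow_one]
    rw [h1, show G γ ^ (1/ξ₂₂) * R * G γ ^ (1/q)
        = G γ ^ (1/ξ₂₂) * G γ ^ (1/q) * R from by ring, h2]
  -- Hölder inequality via lintegrals
  set φ : ℝ → ℝ≥0∞ := fun γ => ENNReal.ofReal (F γ) ^ (1/ξ₂₂) with hφ_def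
  set ψ : ℝ → ℝ≥0∞ := fun γ => ENNReal.ofReal (G γ) ^ (1/q) with hψ_def
  have hφm : Measurable φ := (hFm.ennreal_ofReal).pow_const _
  have hψm : Measurable ψ := (hGm.ennreal_ofReal).pow_const _
  have holder := ENNReal.lintegral_mul_le_Lp_mul_Lq μ hq hφm.aemeasurable hψm.aemeasurable
  have hφp : ∀ γ, φ γ ^ ξ₂₂ = ENNReal.ofReal (F γ) := by
    intro γ
    rw [hφ_def, ← ENNReal.rpow_mul, one_div_mul_cancel hpne, ENNReal.rpow_one]
  have hψq : ∀ γ, ψ γ ^ q = ENNReal.ofReal (G γ) := by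
    intro γ
    rw [hψ_def, ← ENNReal.rpow_mul, one_div_mul_cancel hq0.ne', ENNReal.rpow_one]
  have hHφψ : ∫⁻ γ, ENNReal.ofReal (H γ) ∂μ = ∫⁻ γ, (φ * ψ) γ ∂μ := by
    rw [hμ_def]
    apply lintegral_congr_ae
    filter_upwards [ae_restrict_mem measurableSet_Ioo] with γ hγ
    have h := hpt γ hγ
    rw [h, Pi.mul_apply, hφ_def, hψ_def]
    rw [ENNReal.ofReal_mul (Real.rpow_nonneg (hFnn' γ hγ) _)]
    rw [← ENNReal.ofReal_rpow_of_nonneg (hFnn' γ hγ) (one_div_nonneg.mpr hp0.le),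
      ← ENNReal.ofReal_rpow_of_nonneg (hGnn' γ hγ) (one_div_nonneg.mpr hq0.le)]
  -- convert lintegrals to integrals
  have hμFnn : 0 ≤ᵐ[μ] F := by
    rw [hμ_def]
    filter_upwards [ae_restrict_mem measurableSet_Ioo] with γ hγ using hFnn' γ hγ
  have hμGnn : 0 ≤ᵐ[μ] G := by
    rw [hμ_def]
    filter_upwards [ae_restrict_mem measurableSet_Ioo] with γ hγ using hGnn' γ hγ
  have hμHnn : 0 ≤ᵐ[μ] H := by
    rw [hμ_def]
    filter_upwards [ae_restrict_mem measurableSet_Ioo] with γ hγ using hHnn' γ hγ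
  have hFl : ∫⁻ γ, ENNReal.ofReal (F γ) ∂μ = ENNReal.ofReal (∫ γ, F γ ∂μ) :=
    (ofReal_integral_eq_lintegral_ofReal hFint hμFnn).symm
  have hGl : ∫⁻ γ, ENNReal.ofReal (G γ) ∂μ = ENNReal.ofReal (∫ γ, G γ ∂μ) :=
    (ofReal_integral_eq_lintegral_ofReal hGint hμGnn).symm
  have hHl : ∫⁻ γ, ENNReal.ofReal (H γ) ∂μ = ENNReal.ofReal (∫ γ, H γ ∂μ) :=
    (ofReal_integral_eq_lintegral_ofReal hHint hμHnn).symm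
  have hIF : 0 ≤ ∫ γ, F γ ∂μ := integral_nonneg_of_ae hμFnn
  have hIG : 0 ≤ ∫ γ, G γ ∂μ := integral_nonneg_of_ae hμGnn
  -- the real Hölder inequality
  have hreal : ∫ γ, H γ ∂μ ≤ (∫ γ, F γ ∂μ) ^ (1/ξ₂₂) * (∫ γ, G γ ∂μ) ^ (1/q) := by
    have key : ENNReal.ofReal (∫ γ, H γ ∂μ)
        ≤ ENNReal.ofReal ((∫ γ, F γ ∂μ) ^ (1/ξ₂₂) * (∫ γ, G γ ∂μ) ^ (1/q)) := by
      rw [← hHl, hHφψ]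
      refine le_trans holder ?_
      simp only [hφp, hψq]
      rw [hFl, hGl]
      rw [ENNReal.ofReal_mul (Real.rpow_nonneg hIF _)]
      rw [ENNReal.ofReal_rpow_of_nonneg hIF (one_div_nonneg.mpr hp0.le),
        ENNReal.ofReal_rpow_of_nonneg hIG (one_div_nonneg.mpr hq0.le)]
    exact (ENNReal.ofReal_le_ofReal_iff
      (mul_nonneg (Real.rpow_nonneg hIF _) (Real.rpow_nonneg hIG _))).mp key
  -- compute the integrals
  have hGval : ∫ γ, G γ ∂μ = Real.Gamma ξ₁ * Real.Gamma s / Real.Gamma (ξ₁ + s) := by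
    rw [hμ_def, hG_def]
    exact beta_integral_value hξ₁ hs0
  have hKval : ∫ γ, K γ ∂μ
      = Real.Gamma (ξ₁ + 1) * Real.Gamma (s - 1) / Real.Gamma (ξ₁ + 1 + (s - 1)) := by
    rw [hμ_def, hK_def]
    exact beta_integral_value (by linarith) hsm1
  set B : ℝ := Real.Gamma ξ₁ * Real.Gamma s / Real.Gamma (ξ₁ + s) with hB_def
  set M : ℝ := 1 + ξ₁ / (s - 1) * b with hM_def
  have hΓpos : 0 < Real.Gamma (ξ₁ + s) := Real.Gamma_pos_of_pos (by linarith)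
  have hΓ1pos : 0 < Real.Gamma ξ₁ := Real.Gamma_pos_of_pos hξ₁
  have hΓspos : 0 < Real.Gamma s := Real.Gamma_pos_of_pos hs0
  have hBpos : 0 < B := by
    rw [hB_def]
    exact div_pos (mul_pos hΓ1pos hΓspos) hΓpos
  have hMpos : 0 < M := by
    rw [hM_def]
    have : 0 < ξ₁ / (s - 1) * b := by positivity
    linarith
  have hHval : ∫ γ, H γ ∂μ = B * M := by
    have e0 : ∫ γ, H γ ∂μ = (∫ γ, G γ ∂μ) + b * ∫ γ, K γ ∂μ := by
      rw [hμ_def, hH_def]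
      rw [integral_add hGint (hKint.const_mul b), integral_const_mul]
    rw [e0, hGval, hKval, hB_def, hM_def]
    have g1 : Real.Gamma (ξ₁ + 1) = ξ₁ * Real.Gamma ξ₁ := Real.Gamma_add_one hξ₁.ne'
    have g2 : Real.Gamma s = (s - 1) * Real.Gamma (s - 1) := by
      have h := Real.Gamma_add_one (show s - 1 ≠ 0 from hsm1.ne')
      rw [sub_add_cancel] at h
      linarith
    have g3 : Real.Gamma (ξ₁ + 1 + (s - 1)) = Real.Gamma (ξ₁ + s) := by
      rw [show ξ₁ + 1 + (s - 1) = ξ₁ + s by ring]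
    rw [g1, g2, g3]
    field_simp
  -- put everything together
  rw [hHval, hGval] at hreal
  clear_value B M
  have hBsplit : B = B ^ (1/ξ₂₂) * B ^ (1/q) := by
    rw [← Real.rpow_add hBpos, hconj, Real.rpow_one]
  have hBq : (0:ℝ) < B ^ (1/q) := Real.rpow_pos_of_pos hBpos _
  have hdiv : B ^ (1/ξ₂₂) * M ≤ (∫ γ, F γ ∂μ) ^ (1/ξ₂₂) := by
    have h3 : B ^ (1/ξ₂₂) * M * B ^ (1/q) ≤ (∫ γ, F γ ∂μ) ^ (1/ξ₂₂) * B ^ (1/q) := by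
      calc B ^ (1/ξ₂₂) * M * B ^ (1/q) = B * M := by
            rw [show B ^ (1/ξ₂₂) * M * B ^ (1/q)
              = B ^ (1/ξ₂₂) * B ^ (1/q) * M from by ring, ← hBsplit]
        _ ≤ (∫ γ, F γ ∂μ) ^ (1/ξ₂₂) * B ^ (1/q) := hreal
    exact le_of_mul_le_mul_right h3 hBq
  have hfinal : B * M ^ ξ₂₂ ≤ ∫ γ, F γ ∂μ := by
    have h4 := Real.rpow_le_rpow (by positivity) hdiv hp0.le
    rw [Real.mul_rpow (Real.rpow_nonneg hBpos.le _) hMpos.le] at h4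
    rw [← Real.rpow_mul hBpos.le, one_div_mul_cancel hpne, Real.rpow_one] at h4
    rw [← Real.rpow_mul hIF, one_div_mul_cancel hpne, Real.rpow_one] at h4
    exact h4
  rw [ge_iff_le, show Real.Gamma s * Real.Gamma ξ₁ / Real.Gamma (s + ξ₁) = B by
    rw [hB_def, add_comm s ξ₁]; ring]
  exact hfinal
end

section
/- For any positive reals ξ₁, ξ₂, c: ∫₀¹ log(1+cρ) · ρ^{ξ₁-1}(1-ρ)^{ξ₂-1}/B(ξ₁,ξ₂) dρ = ∫₀¹ (1-ρ)^{ξ₁+ξ₂-1}/ρ · (1 − 1/(1+cρ)^{ξ₁}) dρ. -/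
set_option maxHeartbeats 1000000

open MeasureTheory Set Real Filter Topology


lemma integrableOn_one_sub_rpow {p : ℝ} (hp : -1 < p) :
    IntegrableOn (fun x : ℝ => (1 - x) ^ p) (Ioo (0:ℝ) 1) := by
  have h : IntervalIntegrable (fun x : ℝ => x ^ p) volume 0 1 :=
    intervalIntegral.intervalIntegrable_rpow' hp
  have h2 : IntervalIntegrable (fun x : ℝ => (1 - x) ^ p) volume 0 1 := by
    simpa using (h.comp_sub_left 1).symm
  exact ((intervalIntegrable_iff_integrableOn_Ioc_of_le zero_le_one).mp h2).mono_set
    Ioo_subset_Ioc_self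

lemma beta_ae_eq {a b : ℝ} :
    ∀ x ∈ Ioo (0:ℝ) 1, ((x:ℂ) ^ ((a:ℂ) - 1) * (1 - (x:ℂ)) ^ ((b:ℂ) - 1)).re
      = x ^ (a - 1) * (1 - x) ^ (b - 1) := by
  intro x hx
  have h1 : ((x:ℂ) ^ ((a:ℂ) - 1)) = ((x ^ (a-1) : ℝ) : ℂ) := by
    rw [Complex.ofReal_cpow hx.1.le]; push_cast; ring_nf
  have h2 : ((1 - (x:ℂ)) ^ ((b:ℂ) - 1)) = (((1-x) ^ (b-1) : ℝ) : ℂ) := by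
    rw [show (1 - (x:ℂ)) = (((1:ℝ) - x : ℝ) : ℂ) by push_cast; ring,
      Complex.ofReal_cpow (by linarith [hx.2] : (0:ℝ) ≤ 1 - x)]
    push_cast; ring_nf
  rw [h1, h2, ← Complex.ofReal_mul, Complex.ofReal_re]

/-- Beta-type integrand is integrable on (0,1). -/
lemma integrableOn_beta {a b : ℝ} (ha : 0 < a) (hb : 0 < b) :
    IntegrableOn (fun x : ℝ => x ^ (a - 1) * (1 - x) ^ (b - 1)) (Ioo (0:ℝ) 1) := by
  have hF : IntervalIntegrable
      (fun x : ℝ => (x : ℂ) ^ ((a:ℂ) - 1) * (1 - (x : ℂ)) ^ ((b:ℂ) - 1)) volume 0 1 :=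
    Complex.betaIntegral_convergent (by simpa using ha) (by simpa using hb)
  have hF' : IntegrableOn
      (fun x : ℝ => (x : ℂ) ^ ((a:ℂ) - 1) * (1 - (x : ℂ)) ^ ((b:ℂ) - 1)) (Ioo (0:ℝ) 1) :=
    ((intervalIntegrable_iff_integrableOn_Ioc_of_le zero_le_one).mp hF).mono_set
      Ioo_subset_Ioc_self
  refine (hF'.re).congr ?_
  refine (ae_restrict_iff' measurableSet_Ioo).2 (ae_of_all _ fun x hx => ?_)
  exact beta_ae_eq x hx

/-- The real Beta integral. -/
lemma beta_integral_value_s3 {a b : ℝ} (ha : 0 < a) (hb : 0 < b) :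
    ∫ x in Ioo (0:ℝ) 1, x ^ (a - 1) * (1 - x) ^ (b - 1)
      = Real.Gamma a * Real.Gamma b / Real.Gamma (a + b) := by
  have key : Complex.Gamma a * Complex.Gamma b
      = Complex.Gamma ((a:ℂ) + b) * Complex.betaIntegral a b :=
    Complex.Gamma_mul_Gamma_eq_betaIntegral (by simpa using ha) (by simpa using hb)
  have hB : Complex.betaIntegral a b
      = ((∫ x in Ioo (0:ℝ) 1, x ^ (a - 1) * (1 - x) ^ (b - 1) : ℝ) : ℂ) := by
    rw [Complex.betaIntegral, intervalIntegral.integral_of_le zero_le_one,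
      integral_Ioc_eq_integral_Ioo]
    rw [show (∫ x in Ioo (0:ℝ) 1, (x:ℂ) ^ ((a:ℂ) - 1) * (1 - (x:ℂ)) ^ ((b:ℂ) - 1))
        = ∫ x in Ioo (0:ℝ) 1, ((x ^ (a - 1) * (1 - x) ^ (b - 1) : ℝ) : ℂ) from
      setIntegral_congr_fun measurableSet_Ioo fun x hx => by
        have h1 : ((x:ℂ) ^ ((a:ℂ) - 1)) = ((x ^ (a-1) : ℝ) : ℂ) := by
          rw [Complex.ofReal_cpow hx.1.le]; push_cast; ring_nf
        have h2 : ((1 - (x:ℂ)) ^ ((b:ℂ) - 1)) = (((1-x) ^ (b-1) : ℝ) : ℂ) := by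
          rw [show (1 - (x:ℂ)) = (((1:ℝ) - x : ℝ) : ℂ) by push_cast; ring,
            Complex.ofReal_cpow (by linarith [hx.2] : (0:ℝ) ≤ 1 - x)]
          push_cast; ring_nf
        rw [h1, h2, ← Complex.ofReal_mul]]
    exact integral_ofReal
  have hG : Complex.Gamma ((a:ℂ) + b) = ((Real.Gamma (a+b) : ℝ) : ℂ) := by
    rw [← Complex.ofReal_add, Complex.Gamma_ofReal]
  rw [hB, hG, Complex.Gamma_ofReal, Complex.Gamma_ofReal, ← Complex.ofReal_mul,
    ← Complex.ofReal_mul] at key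
  have := Complex.ofReal_inj.mp key
  have hGpos : 0 < Real.Gamma (a + b) := Real.Gamma_pos_of_pos (by linarith)
  field_simp
  linarith [this]

-- Lemma A: improper FTC
lemma lemA {s r : ℝ} (hs : 0 < s) (hr : 0 < r) :
    ∫ u in Ioo (0:ℝ) 1, s * (1-u) ^ (s-1) * (1+r*u) ^ (-s-1) = 1/(1+r) := by
  have h1r : (0:ℝ) < 1 + r := by linarith
  have key : ∫ u in (0:ℝ)..1, s * (1-u) ^ (s-1) * (1+r*u) ^ (-s-1)
      = 0 - (-(1/(1+r))) := by
    apply intervalIntegral.integral_eq_sub_of_hasDerivAt_of_tendsto zero_lt_one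
      (f := fun u => -((1-u) ^ s * (1+r*u) ^ (-s) / (1+r)))
    · intro u hu
      have hu1 : (0:ℝ) < 1 - u := by linarith [hu.2]
      have hru : (0:ℝ) < 1 + r * u := by nlinarith [hu.1]
      have d1 : HasDerivAt (fun u : ℝ => (1-u) ^ s) (s * (1-u) ^ (s-1) * (-1)) u := by
        have := (Real.hasDerivAt_rpow_const (x := 1-u) (p := s) (Or.inl hu1.ne')).comp u
          ((hasDerivAt_id u).const_sub 1)
        simpa [Function.comp_def] using this
      have d2 : HasDerivAt (fun u : ℝ => (1+r*u) ^ (-s)) ((-s) * (1+r*u) ^ (-s-1) * r) u := by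
        have := (Real.hasDerivAt_rpow_const (x := 1+r*u) (p := -s) (Or.inl hru.ne')).comp u
          (((hasDerivAt_id u).const_mul r).const_add 1)
        simpa [Function.comp_def] using this
      have := ((d1.mul d2).div_const (1+r)).neg
      convert this using 1
      · rfl
      have e1 : (1-u) ^ s = (1-u) ^ (s-1) * (1-u) := by
        rw [← Real.rpow_add_one hu1.ne']; ring_nf
      have e2 : (1+r*u) ^ (-s) = (1+r*u) ^ (-s-1) * (1+r*u) := by
        rw [← Real.rpow_add_one hru.ne']; ring_nf
      rw [e1, e2]; field_simp; ring
    · -- interval integrability of the derivative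
      rw [intervalIntegrable_iff_integrableOn_Ioc_of_le zero_le_one]
      have hint : IntegrableOn (fun u : ℝ => s * (1-u) ^ (s-1)) (Ioc (0:ℝ) 1) := by
        have h2 : IntervalIntegrable (fun x : ℝ => x ^ (s-1)) volume 0 1 :=
          intervalIntegral.intervalIntegrable_rpow' (by linarith)
        have h3 : IntervalIntegrable (fun x : ℝ => (1-x) ^ (s-1)) volume 0 1 := by
          simpa using (h2.comp_sub_left 1).symm
        exact ((intervalIntegrable_iff_integrableOn_Ioc_of_le zero_le_one).mp h3).const_mul s
      refine Integrable.mono' hint ?_ ?_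
      · apply Measurable.aestronglyMeasurable
        fun_prop
      · refine (ae_restrict_iff' measurableSet_Ioc).2 (ae_of_all _ fun u hu => ?_)
        have hru : (1:ℝ) ≤ 1 + r * u := by nlinarith [hu.1]
        have h1 : (1+r*u) ^ (-s-1) ≤ 1 :=
          Real.rpow_le_one_of_one_le_of_nonpos hru (by linarith)
        have h2 : (0:ℝ) ≤ (1-u) ^ (s-1) := Real.rpow_nonneg (by linarith [hu.2]) _
        have h3 : (0:ℝ) ≤ (1+r*u) ^ (-s-1) := Real.rpow_nonneg (by linarith) _
        rw [Real.norm_eq_abs, abs_of_nonneg (by positivity)]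
        calc s * (1-u) ^ (s-1) * (1+r*u) ^ (-s-1) ≤ s * (1-u) ^ (s-1) * 1 := by
              apply mul_le_mul_of_nonneg_left h1 (by positivity)
          _ = s * (1-u) ^ (s-1) := by ring
    · -- tendsto at 0⁺
      have hc : ContinuousAt (fun u : ℝ => -((1-u) ^ s * (1+r*u) ^ (-s) / (1+r))) 0 := by
        have c1 : ContinuousAt (fun u : ℝ => (1-u) ^ s) 0 := by
          apply ContinuousAt.rpow_const (by fun_prop)
          left; norm_num
        have c2 : ContinuousAt (fun u : ℝ => (1+r*u) ^ (-s)) 0 := by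
          apply ContinuousAt.rpow_const (by fun_prop)
          left; norm_num
        exact (((c1.mul c2).div_const _).neg)
      simpa using hc.tendsto.mono_left (nhdsWithin_le_nhds : 𝓝[>] (0:ℝ) ≤ 𝓝 0)
    · -- tendsto at 1⁻
      have hc : ContinuousAt (fun u : ℝ => -((1-u) ^ s * (1+r*u) ^ (-s) / (1+r))) 1 := by
        have c1 : ContinuousAt (fun u : ℝ => (1-u) ^ s) 1 := by
          apply ContinuousAt.rpow_const (by fun_prop)
          right; exact hs.le
        have c2 : ContinuousAt (fun u : ℝ => (1+r*u) ^ (-s)) 1 := by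
          apply ContinuousAt.rpow_const (by fun_prop)
          left; nlinarith
        exact (((c1.mul c2).div_const _).neg)
      simpa [Real.zero_rpow hs.ne'] using
        hc.tendsto.mono_left (nhdsWithin_le_nhds : 𝓝[<] (1:ℝ) ≤ 𝓝 1)
  rw [intervalIntegral.integral_of_le zero_le_one, integral_Ioc_eq_integral_Ioo] at key
  rw [key]; ring

-- Lemma B: FTC in r
lemma lemB {s u t : ℝ} (hs : 0 < s) (hu : 0 < u) (ht : 0 < t) :
    ∫ r in Ioo (0:ℝ) t, s * u * (1+r*u) ^ (-s-1) = 1 - (1+t*u) ^ (-s) := by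
  have key : ∫ r in (0:ℝ)..t, s * u * (1+r*u) ^ (-s-1)
      = (-(1+t*u) ^ (-s)) - (-(1+0*u) ^ (-s)) := by
    apply intervalIntegral.integral_eq_sub_of_hasDerivAt
      (f := fun r => -(1+r*u) ^ (-s))
    · intro r hr
      rw [uIcc_of_le ht.le] at hr
      have hru : (0:ℝ) < 1 + r * u := by nlinarith [hr.1]
      have := ((Real.hasDerivAt_rpow_const (x := 1+r*u) (p := -s) (Or.inl hru.ne')).comp r
        (((hasDerivAt_id r).mul_const u).const_add 1)).neg
      convert this using 1
      · rfl
      simp; ring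
    · apply ContinuousOn.intervalIntegrable
      intro r hr
      rw [uIcc_of_le ht.le] at hr
      have hru : (0:ℝ) < 1 + r * u := by nlinarith [hr.1]
      exact ((continuousWithinAt_const).mul
        (((continuousWithinAt_id.mul continuousWithinAt_const).const_add 1).rpow_const
          (Or.inl hru.ne')))
  rw [intervalIntegral.integral_of_le ht.le, integral_Ioc_eq_integral_Ioo] at key
  rw [key]
  simp only [zero_mul, add_zero, Real.one_rpow]
  ring

-- log FTC
lemma lemLog {t : ℝ} (ht : 0 < t) :
    ∫ r in Ioo (0:ℝ) t, 1/(1+r) = Real.log (1+t) := by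
  have key : ∫ r in (0:ℝ)..t, 1/(1+r) = Real.log (1+t) - Real.log (1+0) := by
    apply intervalIntegral.integral_eq_sub_of_hasDerivAt (f := fun r => Real.log (1+r))
    · intro r hr
      rw [uIcc_of_le ht.le] at hr
      have hru : (0:ℝ) < 1 + r := by linarith [hr.1]
      have := (Real.hasDerivAt_log hru.ne').comp r ((hasDerivAt_id r).const_add 1)
      simpa [one_div, Function.comp_def] using this
    · apply ContinuousOn.intervalIntegrable
      intro r hr
      rw [uIcc_of_le ht.le] at hr
      have hru : (0:ℝ) < 1 + r := by linarith [hr.1]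
      exact continuousWithinAt_const.div ((continuousWithinAt_id).const_add 1) hru.ne'
  rw [intervalIntegral.integral_of_le ht.le, integral_Ioc_eq_integral_Ioo] at key
  rw [key]; simp

lemma lemD {a b x : ℝ} (ha : 0 < a) (hb : 0 < b) (hx : 0 < x) :
    ∫ ρ in Ioo (0:ℝ) 1, ρ ^ (a-1) * (1-ρ) ^ (b-1) * (1+x*ρ) ^ (-(a+b))
      = (1+x) ^ (-a) * ∫ v in Ioo (0:ℝ) 1, v ^ (a-1) * (1-v) ^ (b-1) := by
  have h1x : (0:ℝ) < 1 + x := by linarith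
  set φ : ℝ → ℝ := fun v => v / (1 + x - x*v) with hφ
  set φ' : ℝ → ℝ := fun v => (1+x) / (1 + x - x*v)^2 with hφ'
  have hD : ∀ v : ℝ, v < 1 → 0 < 1 + x - x*v := by
    intro v hv; nlinarith
  have himg : φ '' Ioo (0:ℝ) 1 = Ioo (0:ℝ) 1 := by
    ext y
    constructor
    · rintro ⟨v, hv, rfl⟩
      have hDv := hD v hv.2
      constructor
      · exact div_pos hv.1 hDv
      · rw [div_lt_one hDv]; nlinarith [hv.1, hv.2]
    · intro hy
      obtain ⟨hy1, hy2⟩ := hy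
      have hxy : (0:ℝ) < 1 + x*y := by nlinarith
      refine ⟨y*(1+x)/(1+x*y), ⟨div_pos (mul_pos hy1 h1x) hxy, ?_⟩, ?_⟩
      · rw [div_lt_one hxy]; nlinarith
      · have hDv : 1 + x - x * (y*(1+x)/(1+x*y)) = (1+x)/(1+x*y) := by
          field_simp; ring
        simp only [hφ, hDv]
        rw [div_div_div_eq]
        field_simp
  have hderiv : ∀ v ∈ Ioo (0:ℝ) 1, HasDerivWithinAt φ (φ' v) (Ioo (0:ℝ) 1) v := by
    intro v hv
    have hDv := hD v hv.2
    have h := (hasDerivAt_id v).div ((((hasDerivAt_id v).const_mul x).const_sub (1+x)))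
      hDv.ne'
    refine (HasDerivAt.hasDerivWithinAt ?_)
    convert h using 1
    · rfl
    · rfl
    · show (1+x) / (1 + x - x*v)^2 = (1 * (1 + x - x * v) - v * -(x * 1)) / (1 + x - x * v) ^ 2
      ring
  have hinj : InjOn φ (Ioo (0:ℝ) 1) := by
    intro v1 h1 v2 h2 he
    have hD1 := hD v1 h1.2
    have hD2 := hD v2 h2.2
    simp only [hφ, div_eq_div_iff hD1.ne' hD2.ne'] at he
    nlinarith [he]
  have key := integral_image_eq_integral_abs_deriv_smul measurableSet_Ioo hderiv hinj
    (fun ρ => ρ ^ (a-1) * (1-ρ) ^ (b-1) * (1+x*ρ) ^ (-(a+b)))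
  rw [himg] at key
  rw [key]
  rw [← integral_const_mul]
  refine setIntegral_congr_fun measurableSet_Ioo fun v hv => ?_
  have hDv := hD v hv.2
  have hv0 := hv.1
  have hv1 : (0:ℝ) < 1 - v := by linarith [hv.2]
  have e0 : |φ' v| = (1+x) * (1+x-x*v) ^ (-(2:ℝ)) := by
    rw [abs_of_pos (by positivity : (0:ℝ) < φ' v), Real.rpow_neg hDv.le, Real.rpow_two]
    simp only [hφ']
    ring
  have e1 : φ v = v / (1+x-x*v) := rfl
  have e2 : 1 - φ v = (1+x)*(1-v) / (1+x-x*v) := by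
    rw [e1, eq_div_iff hDv.ne', sub_mul, div_mul_cancel₀ _ hDv.ne']; ring
  have e3 : 1 + x * φ v = (1+x) / (1+x-x*v) := by
    rw [e1]; field_simp; ring
  have hφv : 0 < φ v := div_pos hv0 hDv
  simp only [smul_eq_mul]
  rw [e0, e2, e3, e1]
  rw [Real.div_rpow hv0.le hDv.le, Real.div_rpow (by positivity) hDv.le,
    Real.div_rpow h1x.le hDv.le, Real.mul_rpow h1x.le hv1.le]
  rw [div_eq_mul_inv, div_eq_mul_inv, div_eq_mul_inv,
    ← Real.rpow_neg hDv.le, ← Real.rpow_neg hDv.le, ← Real.rpow_neg hDv.le]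
  have collect : ∀ p q : ℝ, (1+x-x*v) ^ p * (1+x-x*v) ^ q = (1+x-x*v) ^ (p+q) :=
    fun p q => (Real.rpow_add hDv p q).symm
  have collectx : ∀ p q : ℝ, (1+x) ^ p * (1+x) ^ q = (1+x) ^ (p+q) :=
    fun p q => (Real.rpow_add h1x p q).symm
  calc (1+x) * (1+x-x*v) ^ (-(2:ℝ)) *
        (v ^ (a-1) * (1+x-x*v) ^ (-(a-1)) *
          ((1+x) ^ (b-1) * (1-v) ^ (b-1) * (1+x-x*v) ^ (-(b-1))) *
          ((1+x) ^ (-(a+b)) * (1+x-x*v) ^ (-(-(a+b)))))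
      = ((1+x) ^ (1:ℝ) * (1+x) ^ (b-1) * (1+x) ^ (-(a+b))) *
        ((1+x-x*v) ^ (-(2:ℝ)) * (1+x-x*v) ^ (-(a-1)) * (1+x-x*v) ^ (-(b-1)) *
          (1+x-x*v) ^ (-(-(a+b)))) * (v ^ (a-1) * (1-v) ^ (b-1)) := by
        rw [Real.rpow_one]; ring
    _ = (1+x) ^ (-a) * (v ^ (a-1) * (1-v) ^ (b-1)) := by
        rw [collectx, collectx, collect, collect, collect,
          show (1:ℝ) + (b-1) + -(a+b) = -a by ring,
          show -(2:ℝ) + -(a-1) + -(b-1) + -(-(a+b)) = 0 by ring, Real.rpow_zero, mul_one]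

lemma intB {s u t : ℝ} (hs : 0 < s) (hu : 0 < u) (ht : 0 < t) :
    IntegrableOn (fun r => s * u * (1+r*u) ^ (-s-1)) (Ioo (0:ℝ) t) := by
  refine Integrable.mono' (g := fun _ => s * u)
    (integrableOn_const (C := s*u) (by simp [Real.volume_Ioo]))
    (by apply Measurable.aestronglyMeasurable; fun_prop) ?_
  refine (ae_restrict_iff' measurableSet_Ioo).2 (ae_of_all _ fun r hr => ?_)
  have hru : (1:ℝ) ≤ 1 + r * u := by nlinarith [hr.1]
  have h1 : (1+r*u) ^ (-s-1) ≤ 1 := Real.rpow_le_one_of_one_le_of_nonpos hru (by linarith)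
  have h3 : (0:ℝ) ≤ (1+r*u) ^ (-s-1) := Real.rpow_nonneg (by linarith) _
  rw [Real.norm_eq_abs, abs_of_nonneg (by positivity)]
  exact mul_le_of_le_one_right (mul_pos hs hu).le h1

lemma bound1 {s u t : ℝ} (hs : 0 < s) (hu : 0 < u) (hu1 : u < 1) (ht : 0 < t) :
    0 ≤ 1 - (1+t*u) ^ (-s) ∧ 1 - (1+t*u) ^ (-s) ≤ s * t * u := by
  constructor
  · have : (1+t*u) ^ (-s) ≤ 1 :=
      Real.rpow_le_one_of_one_le_of_nonpos (by nlinarith) (by linarith)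
    linarith
  · rw [← lemB hs hu ht]
    calc ∫ r in Ioo (0:ℝ) t, s * u * (1+r*u) ^ (-s-1)
        ≤ ∫ _r in Ioo (0:ℝ) t, s * u := by
          refine setIntegral_mono_on (intB hs hu ht)
            (integrableOn_const (C := s*u) (by simp [Real.volume_Ioo]))
            measurableSet_Ioo fun r hr => ?_
          have hru : (1:ℝ) ≤ 1 + r * u := by nlinarith [hr.1]
          have h1 : (1+r*u) ^ (-s-1) ≤ 1 :=
            Real.rpow_le_one_of_one_le_of_nonpos hru (by linarith)
          nlinarith [mul_pos hs hu]
      _ = s * t * u := by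
          simp [Real.volume_Ioo, ENNReal.toReal_ofReal ht.le]
          rw [max_eq_left ht.le]
          ring

lemma lemC {s t : ℝ} (hs : 0 < s) (ht : 0 < t) :
    ∫ u in Ioo (0:ℝ) 1, (1-u) ^ (s-1) / u * (1 - (1+t*u) ^ (-s)) = Real.log (1+t) := by
  set F : ℝ → ℝ → ℝ := fun u r => s * (1-u) ^ (s-1) * (1+r*u) ^ (-s-1) with hF
  have hone_sub : IntegrableOn (fun x : ℝ => (1-x) ^ (s-1)) (Ioo (0:ℝ) 1) := by
    have h2 : IntervalIntegrable (fun x : ℝ => x ^ (s-1)) volume 0 1 :=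
      intervalIntegral.intervalIntegrable_rpow' (by linarith)
    have h3 : IntervalIntegrable (fun x : ℝ => (1-x) ^ (s-1)) volume 0 1 := by
      simpa using (h2.comp_sub_left 1).symm
    exact ((intervalIntegrable_iff_integrableOn_Ioc_of_le zero_le_one).mp h3).mono_set
      Ioo_subset_Ioc_self
  -- step 1: pointwise identity
  have step1 : ∀ u ∈ Ioo (0:ℝ) 1,
      (1-u) ^ (s-1) / u * (1 - (1+t*u) ^ (-s)) = ∫ r in Ioo (0:ℝ) t, F u r := by
    intro u hu
    have h1 : ∫ r in Ioo (0:ℝ) t, F u r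
        = (1-u) ^ (s-1) / u * ∫ r in Ioo (0:ℝ) t, s * u * (1+r*u) ^ (-s-1) := by
      rw [← integral_const_mul]
      refine setIntegral_congr_fun measurableSet_Ioo fun r hr => ?_
      have hu0 := hu.1.ne'
      simp only [hF]
      field_simp
    rw [h1, lemB hs hu.1 ht]
  -- integrability on the product
  have hInt : Integrable (Function.uncurry F)
      ((volume.restrict (Ioo (0:ℝ) 1)).prod (volume.restrict (Ioo (0:ℝ) t))) := by
    have hmeas : AEStronglyMeasurable (Function.uncurry F)
        ((volume.restrict (Ioo (0:ℝ) 1)).prod (volume.restrict (Ioo (0:ℝ) t))) := by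
      apply Measurable.aestronglyMeasurable
      simp only [hF, Function.uncurry]
      fun_prop
    rw [integrable_prod_iff hmeas]
    constructor
    · refine (ae_restrict_iff' measurableSet_Ioo).2 (ae_of_all _ fun u hu => ?_)
      have := (intB hs hu.1 ht).const_mul ((1-u) ^ (s-1) / u)
      refine this.congr ?_
      refine (ae_restrict_iff' measurableSet_Ioo).2 (ae_of_all _ fun r hr => ?_)
      have hu0 := hu.1.ne'
      simp only [hF, Function.uncurry_apply_pair]
      field_simp
    · have : (fun u => ∫ r in Ioo (0:ℝ) t, ‖F u r‖) =ᶠ[ae (volume.restrict (Ioo (0:ℝ) 1))]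
          (fun u => (1-u) ^ (s-1) / u * (1 - (1+t*u) ^ (-s))) := by
        refine (ae_restrict_iff' measurableSet_Ioo).2 (ae_of_all _ fun u hu => ?_)
        show (∫ r in Ioo (0:ℝ) t, ‖F u r‖) = (1-u) ^ (s-1) / u * (1 - (1+t*u) ^ (-s))
        rw [step1 u hu]
        refine setIntegral_congr_fun measurableSet_Ioo fun r hr => ?_
        have h2 : (0:ℝ) ≤ (1-u) ^ (s-1) := Real.rpow_nonneg (by linarith [hu.2]) _
        have h3 : (0:ℝ) ≤ (1+r*u) ^ (-s-1) := Real.rpow_nonneg (by nlinarith [hr.1, hu.1]) _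
        simp only [hF]
        rw [Real.norm_eq_abs, abs_of_nonneg (by positivity)]
      refine (Integrable.congr ?_ this.symm)
      refine Integrable.mono' (hone_sub.const_mul (s*t)) ?_ ?_
      · apply Measurable.aestronglyMeasurable; fun_prop
      · refine (ae_restrict_iff' measurableSet_Ioo).2 (ae_of_all _ fun u hu => ?_)
        obtain ⟨hb0, hb1⟩ := bound1 hs hu.1 hu.2 ht
        have h2 : (0:ℝ) ≤ (1-u) ^ (s-1) := Real.rpow_nonneg (by linarith [hu.2]) _
        rw [Real.norm_eq_abs, abs_of_nonneg (mul_nonneg (div_nonneg h2 hu.1.le) hb0)]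
        rw [div_mul_eq_mul_div, div_le_iff₀ hu.1]
        calc (1-u) ^ (s-1) * (1 - (1+t*u) ^ (-s)) ≤ (1-u) ^ (s-1) * (s*t*u) :=
              mul_le_mul_of_nonneg_left hb1 h2
          _ = s * t * (1-u) ^ (s-1) * u := by ring
  -- now the computation
  calc ∫ u in Ioo (0:ℝ) 1, (1-u) ^ (s-1) / u * (1 - (1+t*u) ^ (-s))
      = ∫ u in Ioo (0:ℝ) 1, ∫ r in Ioo (0:ℝ) t, F u r := by
        exact setIntegral_congr_fun measurableSet_Ioo step1
    _ = ∫ r in Ioo (0:ℝ) t, ∫ u in Ioo (0:ℝ) 1, F u r := integral_integral_swap hInt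
    _ = ∫ r in Ioo (0:ℝ) t, 1/(1+r) := by
        refine setIntegral_congr_fun measurableSet_Ioo fun r hr => ?_
        exact lemA hs hr.1
    _ = Real.log (1+t) := lemLog ht

lemma integrableOn_one_sub_rpow' {p : ℝ} (hp : -1 < p) :
    IntegrableOn (fun x : ℝ => (1 - x) ^ p) (Ioo (0:ℝ) 1) := by
  have h : IntervalIntegrable (fun x : ℝ => x ^ p) volume 0 1 :=
    intervalIntegral.intervalIntegrable_rpow' hp
  have h2 : IntervalIntegrable (fun x : ℝ => (1 - x) ^ p) volume 0 1 := by
    simpa using (h.comp_sub_left 1).symm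
  exact ((intervalIntegrable_iff_integrableOn_Ioc_of_le zero_le_one).mp h2).mono_set
    Ioo_subset_Ioc_self

lemma intC {s t : ℝ} (hs : 0 < s) (ht : 0 < t) :
    IntegrableOn (fun u : ℝ => (1-u) ^ (s-1) / u * (1 - (1+t*u) ^ (-s))) (Ioo (0:ℝ) 1) := by
  refine Integrable.mono' ((integrableOn_one_sub_rpow' (by linarith : (-1:ℝ) < s-1)).const_mul
    (s*t)) (by apply Measurable.aestronglyMeasurable; fun_prop) ?_
  refine (ae_restrict_iff' measurableSet_Ioo).2 (ae_of_all _ fun u hu => ?_)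
  obtain ⟨hb0, hb1⟩ := bound1 hs hu.1 hu.2 ht
  have h2 : (0:ℝ) ≤ (1-u) ^ (s-1) := Real.rpow_nonneg (by linarith [hu.2]) _
  rw [Real.norm_eq_abs, abs_of_nonneg (mul_nonneg (div_nonneg h2 hu.1.le) hb0)]
  rw [div_mul_eq_mul_div, div_le_iff₀ hu.1]
  calc (1-u) ^ (s-1) * (1 - (1+t*u) ^ (-s)) ≤ (1-u) ^ (s-1) * (s*t*u) :=
        mul_le_mul_of_nonneg_left hb1 h2
    _ = s * t * (1-u) ^ (s-1) * u := by ring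

lemma lemF {a b x : ℝ} (ha : 0 < a) (hb : 0 < b) (hx : 0 < x) :
    ∫ ρ in Ioo (0:ℝ) 1, ρ ^ (a-1) * (1-ρ) ^ (b-1) * (1 - (1+x*ρ) ^ (-(a+b)))
      = (Real.Gamma a * Real.Gamma b / Real.Gamma (a+b)) * (1 - (1+x) ^ (-a)) := by
  have hint2 : IntegrableOn
      (fun ρ : ℝ => ρ ^ (a-1) * (1-ρ) ^ (b-1) * (1+x*ρ) ^ (-(a+b))) (Ioo (0:ℝ) 1) := by
    refine Integrable.mono' (integrableOn_beta ha hb)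
      (by apply Measurable.aestronglyMeasurable; fun_prop) ?_
    refine (ae_restrict_iff' measurableSet_Ioo).2 (ae_of_all _ fun ρ hρ => ?_)
    have h1 : (0:ℝ) ≤ ρ ^ (a-1) := Real.rpow_nonneg hρ.1.le _
    have h2 : (0:ℝ) ≤ (1-ρ) ^ (b-1) := Real.rpow_nonneg (by linarith [hρ.2]) _
    have h3 : (1+x*ρ) ^ (-(a+b)) ≤ 1 :=
      Real.rpow_le_one_of_one_le_of_nonpos (by nlinarith [hρ.1]) (by linarith)
    have h4 : (0:ℝ) ≤ (1+x*ρ) ^ (-(a+b)) := Real.rpow_nonneg (by nlinarith [hρ.1]) _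
    rw [Real.norm_eq_abs, abs_of_nonneg (by positivity)]
    calc ρ ^ (a-1) * (1-ρ) ^ (b-1) * (1+x*ρ) ^ (-(a+b)) ≤ ρ ^ (a-1) * (1-ρ) ^ (b-1) * 1 :=
          mul_le_mul_of_nonneg_left h3 (by positivity)
      _ = ρ ^ (a-1) * (1-ρ) ^ (b-1) := by ring
  have congr1 : ∫ ρ in Ioo (0:ℝ) 1, ρ ^ (a-1) * (1-ρ) ^ (b-1) * (1 - (1+x*ρ) ^ (-(a+b)))
      = ∫ ρ in Ioo (0:ℝ) 1, (ρ ^ (a-1) * (1-ρ) ^ (b-1)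
          - ρ ^ (a-1) * (1-ρ) ^ (b-1) * (1+x*ρ) ^ (-(a+b))) := by
    refine setIntegral_congr_fun measurableSet_Ioo fun ρ _ => ?_
    ring
  rw [congr1, integral_sub (integrableOn_beta ha hb) hint2, beta_integral_value_s3 ha hb,
    lemD ha hb hx, beta_integral_value_s3 ha hb]
  ring

noncomputable def Gfun (ξ₁ ξ₂ B s c : ℝ) (ρ u : ℝ) : ℝ :=
  (ρ ^ (ξ₁-1) * (1-ρ) ^ (ξ₂-1) / B) * ((1-u) ^ (s-1) / u * (1 - (1+(c*ρ)*u) ^ (-s)))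

lemma Gfun_meas (ξ₁ ξ₂ B s c : ℝ) : Measurable (Function.uncurry (Gfun ξ₁ ξ₂ B s c)) := by
  unfold Gfun Function.uncurry
  fun_prop

theorem stmt_3 (ξ₁ ξ₂ c : ℝ) (hξ₁ : 0 < ξ₁) (hξ₂ : 0 < ξ₂) (hc : 0 < c) :
    ∫ ρ in Set.Ioo (0:ℝ) 1,
        Real.log (1 + c * ρ) * (ρ ^ (ξ₁ - 1) * (1 - ρ) ^ (ξ₂ - 1)
          / (Real.Gamma ξ₁ * Real.Gamma ξ₂ / Real.Gamma (ξ₁ + ξ₂)))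
      = ∫ ρ in Set.Ioo (0:ℝ) 1,
          (1 - ρ) ^ (ξ₁ + ξ₂ - 1) / ρ * (1 - 1 / (1 + c * ρ) ^ ξ₁) := by
  set B : ℝ := Real.Gamma ξ₁ * Real.Gamma ξ₂ / Real.Gamma (ξ₁ + ξ₂) with hBdef
  have hs : 0 < ξ₁ + ξ₂ := by linarith
  have hB : 0 < B := by
    have := Real.Gamma_pos_of_pos hξ₁
    have := Real.Gamma_pos_of_pos hξ₂
    have := Real.Gamma_pos_of_pos hs
    positivity
  set s : ℝ := ξ₁ + ξ₂ with hsdef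
  set G : ℝ → ℝ → ℝ := Gfun ξ₁ ξ₂ B s c with hG
  have hGdef : ∀ ρ u, G ρ u = (ρ ^ (ξ₁-1) * (1-ρ) ^ (ξ₂-1) / B) *
      ((1-u) ^ (s-1) / u * (1 - (1+(c*ρ)*u) ^ (-s))) := fun ρ u => rfl
  have hw_nonneg : ∀ ρ ∈ Ioo (0:ℝ) 1, 0 ≤ ρ ^ (ξ₁-1) * (1-ρ) ^ (ξ₂-1) / B := by
    intro ρ hρ
    have h1 : (0:ℝ) ≤ ρ ^ (ξ₁-1) := Real.rpow_nonneg hρ.1.le _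
    have h2 : (0:ℝ) ≤ (1-ρ) ^ (ξ₂-1) := Real.rpow_nonneg (by linarith [hρ.2]) _
    positivity
  -- step 1
  have step1 : ∀ ρ ∈ Ioo (0:ℝ) 1,
      Real.log (1 + c * ρ) * (ρ ^ (ξ₁-1) * (1-ρ) ^ (ξ₂-1) / B)
        = ∫ u in Ioo (0:ℝ) 1, G ρ u := by
    intro ρ hρ
    have hcρ : 0 < c * ρ := mul_pos hc hρ.1
    rw [show (∫ u in Ioo (0:ℝ) 1, G ρ u)
        = (ρ ^ (ξ₁-1) * (1-ρ) ^ (ξ₂-1) / B) *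
          ∫ u in Ioo (0:ℝ) 1, (1-u) ^ (s-1) / u * (1 - (1+(c*ρ)*u) ^ (-s)) from
      integral_const_mul _ _]
    rw [lemC hs hcρ]
    ring
  -- integrability on the product
  have hInt : Integrable (Function.uncurry G)
      ((volume.restrict (Ioo (0:ℝ) 1)).prod (volume.restrict (Ioo (0:ℝ) 1))) := by
    have hmeas : AEStronglyMeasurable (Function.uncurry G)
        ((volume.restrict (Ioo (0:ℝ) 1)).prod (volume.restrict (Ioo (0:ℝ) 1))) := by
      exact (Gfun_meas ξ₁ ξ₂ B s c).aestronglyMeasurable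
    rw [integrable_prod_iff hmeas]
    constructor
    · refine (ae_restrict_iff' measurableSet_Ioo).2 (ae_of_all _ fun ρ hρ => ?_)
      exact (intC hs (mul_pos hc hρ.1)).const_mul (ρ ^ (ξ₁-1) * (1-ρ) ^ (ξ₂-1) / B)
    · have hcongr : (fun ρ => ∫ u in Ioo (0:ℝ) 1, ‖G ρ u‖)
          =ᶠ[ae (volume.restrict (Ioo (0:ℝ) 1))]
          (fun ρ => Real.log (1 + c * ρ) * (ρ ^ (ξ₁-1) * (1-ρ) ^ (ξ₂-1) / B)) := by
        refine (ae_restrict_iff' measurableSet_Ioo).2 (ae_of_all _ fun ρ hρ => ?_)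
        show (∫ u in Ioo (0:ℝ) 1, ‖G ρ u‖)
          = Real.log (1 + c * ρ) * (ρ ^ (ξ₁-1) * (1-ρ) ^ (ξ₂-1) / B)
        rw [step1 ρ hρ]
        refine setIntegral_congr_fun measurableSet_Ioo fun u hu => ?_
        obtain ⟨hb0, _⟩ := bound1 hs hu.1 hu.2 (mul_pos hc hρ.1)
        have h2 : (0:ℝ) ≤ (1-u) ^ (s-1) := Real.rpow_nonneg (by linarith [hu.2]) _
        exact norm_of_nonneg (mul_nonneg (hw_nonneg ρ hρ)
          (mul_nonneg (div_nonneg h2 hu.1.le) hb0))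
      refine Integrable.congr ?_ hcongr.symm
      refine Integrable.mono' (((integrableOn_beta hξ₁ hξ₂).const_mul
        (Real.log (1+c) / B)))
        ((( Real.measurable_log.comp (by fun_prop : Measurable fun ρ : ℝ => 1 + c * ρ)).mul
          (by fun_prop)).aestronglyMeasurable) ?_
      refine (ae_restrict_iff' measurableSet_Ioo).2 (ae_of_all _ fun ρ hρ => ?_)
      have hlog0 : 0 ≤ Real.log (1 + c * ρ) :=
        Real.log_nonneg (by nlinarith [hρ.1])
      have hlog1 : Real.log (1 + c * ρ) ≤ Real.log (1 + c) := by
        apply Real.log_le_log (by nlinarith [hρ.1])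
        nlinarith [hρ.2]
      rw [Real.norm_eq_abs, abs_of_nonneg (mul_nonneg hlog0 (hw_nonneg ρ hρ))]
      have h1 : (0:ℝ) ≤ ρ ^ (ξ₁-1) := Real.rpow_nonneg hρ.1.le _
      have h2 : (0:ℝ) ≤ (1-ρ) ^ (ξ₂-1) := Real.rpow_nonneg (by linarith [hρ.2]) _
      calc Real.log (1 + c * ρ) * (ρ ^ (ξ₁-1) * (1-ρ) ^ (ξ₂-1) / B)
          ≤ Real.log (1 + c) * (ρ ^ (ξ₁-1) * (1-ρ) ^ (ξ₂-1) / B) :=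
            mul_le_mul_of_nonneg_right hlog1 (hw_nonneg ρ hρ)
        _ = Real.log (1+c) / B * (ρ ^ (ξ₁-1) * (1-ρ) ^ (ξ₂-1)) := by ring
  -- step 4 : value of inner integral after swap
  have step4 : ∀ u ∈ Ioo (0:ℝ) 1,
      (∫ ρ in Ioo (0:ℝ) 1, G ρ u)
        = (1-u) ^ (s-1) / u * (1 - (1+c*u) ^ (-ξ₁)) := by
    intro u hu
    have hcu : 0 < c * u := mul_pos hc hu.1
    have h1 : ∫ ρ in Ioo (0:ℝ) 1, G ρ u
        = ((1-u) ^ (s-1) / u / B) *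
          ∫ ρ in Ioo (0:ℝ) 1, ρ ^ (ξ₁-1) * (1-ρ) ^ (ξ₂-1) * (1 - (1+(c*u)*ρ) ^ (-(ξ₁+ξ₂))) := by
      rw [← integral_const_mul]
      refine setIntegral_congr_fun measurableSet_Ioo fun ρ hρ => ?_
      rw [hGdef]
      rw [show (1+(c*ρ)*u) = (1+(c*u)*ρ) from by ring, ← hsdef]
      have hB' := hB.ne'
      field_simp
    rw [h1, lemF hξ₁ hξ₂ hcu, ← hsdef, ← hBdef]
    have hu0 := hu.1.ne'
    have hB0 := hB.ne'
    field_simp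
  -- conclude
  calc ∫ ρ in Ioo (0:ℝ) 1, Real.log (1 + c * ρ) * (ρ ^ (ξ₁-1) * (1-ρ) ^ (ξ₂-1) / B)
      = ∫ ρ in Ioo (0:ℝ) 1, ∫ u in Ioo (0:ℝ) 1, G ρ u :=
        setIntegral_congr_fun measurableSet_Ioo step1
    _ = ∫ u in Ioo (0:ℝ) 1, ∫ ρ in Ioo (0:ℝ) 1, G ρ u := integral_integral_swap hInt
    _ = ∫ u in Ioo (0:ℝ) 1, (1-u) ^ (s-1) / u * (1 - (1+c*u) ^ (-ξ₁)) :=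
        setIntegral_congr_fun measurableSet_Ioo step4
    _ = ∫ ρ in Set.Ioo (0:ℝ) 1, (1 - ρ) ^ (ξ₁ + ξ₂ - 1) / ρ * (1 - 1 / (1 + c * ρ) ^ ξ₁) := by
        refine setIntegral_congr_fun measurableSet_Ioo fun u hu => ?_
        have hcu : (0:ℝ) < 1 + c * u := by nlinarith [hu.1]
        rw [Real.rpow_neg hcu.le, ← one_div, hsdef]
end

section
/- Let ξ₁ > 0 and 1 < ξ₂₁ < ξ₂₂, and for i ∈ {1,2} let F_i(q) = ∫₀^q γ^{ξ₁-1}(1-γ)^{ξ₂ᵢ-1}/B(ξ₁,ξ₂ᵢ) dγ for q ∈ (0,1) be the Beta(ξ₁,ξ₂ᵢ) CDF. Then the ratio F₂^{-1}(ω)/F₁^{-1}(ω) of inverse CDFs is nondecreasing in ω ∈ (0,1). -/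
open MeasureTheory Set Real

/-- The Beta(ξ₁, ξ₂) cumulative distribution function on (0,1). -/
noncomputable def betaCDF (ξ₁ ξ₂ : ℝ) (q : ℝ) : ℝ :=
  ∫ γ in Set.Ioo (0:ℝ) q,
    γ ^ (ξ₁ - 1) * (1 - γ) ^ (ξ₂ - 1) / (Real.Gamma ξ₁ * Real.Gamma ξ₂ / Real.Gamma (ξ₁ + ξ₂))

noncomputable def Bcore (a b x : ℝ) : ℝ := x ^ (a - 1) * (1 - x) ^ (b - 1)
noncomputable def Bfun (a b : ℝ) : ℝ := Real.Gamma a * Real.Gamma b / Real.Gamma (a + b)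
noncomputable def Bpdf (a b x : ℝ) : ℝ := Bcore a b x / Bfun a b

lemma Bfun_pos {a b : ℝ} (ha : 0 < a) (hb : 0 < b) : 0 < Bfun a b :=
  div_pos (mul_pos (Real.Gamma_pos_of_pos ha) (Real.Gamma_pos_of_pos hb))
    (Real.Gamma_pos_of_pos (by linarith))

lemma Bcore_pos {a b x : ℝ} (hx : x ∈ Ioo (0:ℝ) 1) : 0 < Bcore a b x :=
  mul_pos (Real.rpow_pos_of_pos hx.1 _) (Real.rpow_pos_of_pos (by linarith [hx.2]) _)

lemma Bpdf_pos {a b x : ℝ} (ha : 0 < a) (hb : 0 < b) (hx : x ∈ Ioo (0:ℝ) 1) :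
    0 < Bpdf a b x := div_pos (Bcore_pos hx) (Bfun_pos ha hb)

lemma measurable_Bcore (a b : ℝ) : Measurable (Bcore a b) := by
  unfold Bcore; fun_prop

lemma measurable_Bpdf (a b : ℝ) : Measurable (Bpdf a b) :=
  (measurable_Bcore a b).div_const _

lemma continuousAt_Bpdf {x : ℝ} (a b : ℝ) (hx : x ∈ Ioo (0:ℝ) 1) :
    ContinuousAt (Bpdf a b) x := by
  apply ContinuousAt.div_const
  apply ContinuousAt.mul
  · exact Real.continuousAt_rpow_const _ _ (Or.inl (ne_of_gt hx.1))
  · exact (Real.continuousAt_rpow_const _ _ (Or.inl (by nlinarith [hx.2, hx.1]))).comp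
      (continuousAt_const.sub continuousAt_id)

lemma coe_Bcore {a b x : ℝ} (hx : x ∈ Ioo (0:ℝ) 1) :
    ((Bcore a b x : ℝ) : ℂ) = (x:ℂ) ^ ((a:ℂ) - 1) * (1 - (x:ℂ)) ^ ((b:ℂ) - 1) := by
  have h1 : ((a:ℂ) - 1) = ((a - 1 : ℝ) : ℂ) := by push_cast; ring
  have h2 : ((b:ℂ) - 1) = ((b - 1 : ℝ) : ℂ) := by push_cast; ring
  have h3 : (1 - (x:ℂ)) = ((1 - x : ℝ) : ℂ) := by push_cast; ring
  rw [h1, h2, h3, ← Complex.ofReal_cpow (le_of_lt hx.1), ← Complex.ofReal_cpow (by linarith [hx.2])]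
  push_cast [Bcore]; ring

lemma integrableOn_Bcore {a b : ℝ} (ha : 0 < a) (hb : 0 < b) :
    IntegrableOn (Bcore a b) (Ioo (0:ℝ) 1) := by
  have h := Complex.betaIntegral_convergent (u := (a:ℂ)) (v := (b:ℂ)) (by simpa) (by simpa)
  rw [intervalIntegrable_iff_integrableOn_Ioo_of_le (by norm_num)] at h
  have h2 : IntegrableOn (fun x : ℝ =>
      ((x:ℂ) ^ ((a:ℂ) - 1) * (1 - (x:ℂ)) ^ ((b:ℂ) - 1)).re) (Ioo (0:ℝ) 1) := h.re
  apply h2.congr_fun ?_ measurableSet_Ioo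
  intro x hx
  have := coe_Bcore (a := a) (b := b) hx
  simp [← this]

lemma integral_Bcore {a b : ℝ} (ha : 0 < a) (hb : 0 < b) :
    ∫ x in Ioo (0:ℝ) 1, Bcore a b x = Bfun a b := by
  have hG : Complex.Gamma ((a:ℂ) + (b:ℂ)) ≠ 0 := by
    rw [show ((a:ℂ) + (b:ℂ)) = ((a + b : ℝ) : ℂ) by push_cast; ring, Complex.Gamma_ofReal]
    exact_mod_cast ne_of_gt (Real.Gamma_pos_of_pos (by linarith))
  have key := Complex.Gamma_mul_Gamma_eq_betaIntegral
    (s := (a:ℂ)) (t := (b:ℂ)) (by simpa) (by simpa)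
  have hbeta : Complex.betaIntegral (a:ℂ) (b:ℂ) = ((Bfun a b : ℝ) : ℂ) := by
    push_cast at key
    have e1 : Complex.betaIntegral (a:ℂ) (b:ℂ)
        = Complex.Gamma ↑a * Complex.Gamma ↑b / Complex.Gamma ((a:ℂ) + ↑b) := by
      rw [eq_div_iff hG]; linear_combination -key
    rw [e1, show ((a:ℂ) + (b:ℂ)) = ((a + b : ℝ) : ℂ) by push_cast; ring,
      Complex.Gamma_ofReal, Complex.Gamma_ofReal, Complex.Gamma_ofReal, Bfun]
    push_cast
    ring
  have h2 : Complex.betaIntegral (a:ℂ) (b:ℂ)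
      = ∫ x in (0:ℝ)..1, ((Bcore a b x : ℝ) : ℂ) := by
    rw [Complex.betaIntegral]
    apply intervalIntegral.integral_congr_ae
    have hne : ∀ᵐ x : ℝ, x ≠ 1 := by
      refine (Filter.eventually_iff ..).mpr ?_
      rw [mem_ae_iff]
      simpa using (volume_singleton (a := (1:ℝ)))
    filter_upwards [hne] with x hx1 hx
    rw [uIoc_of_le (by norm_num)] at hx
    exact (coe_Bcore ⟨hx.1, lt_of_le_of_ne hx.2 hx1⟩).symm
  rw [hbeta, intervalIntegral.integral_ofReal] at h2
  have h3 : (∫ x in (0:ℝ)..1, Bcore a b x) = ∫ x in Ioo (0:ℝ) 1, Bcore a b x := by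
    rw [intervalIntegral.integral_of_le (by norm_num), integral_Ioc_eq_integral_Ioo]
  rw [h3] at h2
  exact_mod_cast h2.symm

lemma integrableOn_Bpdf {a b : ℝ} (ha : 0 < a) (hb : 0 < b) :
    IntegrableOn (Bpdf a b) (Ioo (0:ℝ) 1) := (integrableOn_Bcore ha hb).div_const _

lemma integral_Bpdf {a b : ℝ} (ha : 0 < a) (hb : 0 < b) :
    ∫ x in Ioo (0:ℝ) 1, Bpdf a b x = 1 := by
  unfold Bpdf
  rw [integral_div, integral_Bcore ha hb, div_self (ne_of_gt (Bfun_pos ha hb))]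

lemma betaCDF_eq (a b q : ℝ) : betaCDF a b q = ∫ x in Ioo (0:ℝ) q, Bpdf a b x := rfl


lemma betaCDF_eq_intervalIntegral (a b : ℝ) {q : ℝ} (hq : 0 ≤ q) :
    betaCDF a b q = ∫ x in (0:ℝ)..q, Bpdf a b x := by
  rw [intervalIntegral.integral_of_le hq, integral_Ioc_eq_integral_Ioo]; rfl

lemma intervalIntegrable_Bpdf {a b s t : ℝ} (ha : 0 < a) (hb : 0 < b)
    (hs : 0 ≤ s) (hst : s ≤ t) (ht : t ≤ 1) :
    IntervalIntegrable (Bpdf a b) volume s t := by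
  rw [intervalIntegrable_iff, uIoc_of_le hst]
  have h : IntegrableOn (Bpdf a b) (Ioc (0:ℝ) 1) :=
    (integrableOn_Ioc_iff_integrableOn_Ioo (by simp)).2 (integrableOn_Bpdf ha hb)
  exact h.mono_set (Ioc_subset_Ioc hs ht)

lemma betaCDF_sub {a b s t : ℝ} (ha : 0 < a) (hb : 0 < b)
    (hs : 0 ≤ s) (hst : s ≤ t) (ht : t ≤ 1) :
    betaCDF a b t - betaCDF a b s = ∫ x in s..t, Bpdf a b x := by
  rw [betaCDF_eq_intervalIntegral a b hs, betaCDF_eq_intervalIntegral a b (hs.trans hst),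
    intervalIntegral.integral_interval_sub_left
      (intervalIntegrable_Bpdf ha hb le_rfl (hs.trans hst) ht)
      (intervalIntegrable_Bpdf ha hb le_rfl hs (hst.trans ht))]

lemma betaCDF_strictMonoOn {a b : ℝ} (ha : 0 < a) (hb : 0 < b) :
    StrictMonoOn (betaCDF a b) (Icc (0:ℝ) 1) := by
  intro s hs t ht hst
  have hpos : 0 < ∫ x in s..t, Bpdf a b x := by
    apply intervalIntegral.intervalIntegral_pos_of_pos_on
      (intervalIntegrable_Bpdf ha hb hs.1 hst.le ht.2)
      (fun x hx => Bpdf_pos ha hb ⟨lt_of_le_of_lt hs.1 hx.1, lt_of_lt_of_le hx.2 ht.2⟩) hst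
  have := betaCDF_sub ha hb hs.1 hst.le ht.2
  linarith

lemma betaCDF_zero (a b : ℝ) : betaCDF a b 0 = 0 := by
  rw [betaCDF_eq]; simp

lemma betaCDF_one {a b : ℝ} (ha : 0 < a) (hb : 0 < b) : betaCDF a b 1 = 1 := by
  rw [betaCDF_eq]; exact integral_Bpdf ha hb

lemma continuousOn_betaCDF {a b : ℝ} (ha : 0 < a) (hb : 0 < b) :
    ContinuousOn (betaCDF a b) (Icc (0:ℝ) 1) := by
  have h : ContinuousOn (fun q => ∫ x in (0:ℝ)..q, Bpdf a b x) (Icc (0:ℝ) 1) := by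
    have hint : IntegrableOn (Bpdf a b) (uIcc (0:ℝ) 1) := by
      rw [uIcc_of_le (by norm_num), integrableOn_Icc_iff_integrableOn_Ioo]
      exact integrableOn_Bpdf ha hb
    simpa [uIcc_of_le (zero_le_one (α := ℝ))] using
      intervalIntegral.continuousOn_primitive_interval hint
  exact h.congr (fun q hq => betaCDF_eq_intervalIntegral a b hq.1)

lemma hasDerivAt_betaCDF {a b x : ℝ} (ha : 0 < a) (hb : 0 < b) (hx : x ∈ Ioo (0:ℝ) 1) :
    HasDerivAt (betaCDF a b) (Bpdf a b x) x := by
  have h1 : IntervalIntegrable (Bpdf a b) volume 0 x :=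
    intervalIntegrable_Bpdf ha hb le_rfl hx.1.le hx.2.le
  have h2 : StronglyMeasurableAtFilter (Bpdf a b) (nhds x) :=
    (measurable_Bpdf a b).stronglyMeasurable.stronglyMeasurableAtFilter
  have h3 := intervalIntegral.integral_hasDerivAt_right h1 h2 (continuousAt_Bpdf a b hx)
  apply h3.congr_of_eventuallyEq
  filter_upwards [Ioo_mem_nhds hx.1 hx.2] with q hq
  exact betaCDF_eq_intervalIntegral a b hq.1.le

lemma setIntegral_pos_Ioo {f : ℝ → ℝ} {s t : ℝ} (hst : s < t)
    (hint : IntegrableOn f (Ioo s t)) (hpos : ∀ x ∈ Ioo s t, 0 < f x) :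
    0 < ∫ x in Ioo s t, f x := by
  rw [setIntegral_pos_iff_support_of_nonneg_ae
    ((ae_restrict_iff' measurableSet_Ioo).2 (ae_of_all _ fun x hx => (hpos x hx).le)) hint]
  have hsub : Ioo s t ⊆ Function.support f ∩ Ioo s t :=
    fun x hx => ⟨ne_of_gt (hpos x hx), hx⟩
  calc (0:ENNReal) < volume (Ioo s t) := by simp [hst]
    _ ≤ volume (Function.support f ∩ Ioo s t) := measure_mono hsub

lemma Bfun_lt {a b₁ b₂ : ℝ} (ha : 0 < a) (hb₁ : 0 < b₁) (hb : b₁ < b₂) :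
    Bfun a b₂ < Bfun a b₁ := by
  rw [← integral_Bcore ha hb₁, ← integral_Bcore ha (hb₁.trans hb), ← sub_pos,
    ← integral_sub (integrableOn_Bcore ha hb₁) (integrableOn_Bcore ha (hb₁.trans hb))]
  apply setIntegral_pos_Ioo zero_lt_one
    ((integrableOn_Bcore ha hb₁).sub (integrableOn_Bcore ha (hb₁.trans hb)))
  intro x hx
  have h1 : (0:ℝ) < 1 - x := by linarith [hx.2]
  have h2 : (1 - x) ^ (b₂ - 1) < (1 - x) ^ (b₁ - 1) :=
    Real.rpow_lt_rpow_of_exponent_gt h1 (by linarith [hx.1]) (by linarith)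
  have h3 : (0:ℝ) < x ^ (a - 1) := Real.rpow_pos_of_pos hx.1 _
  simp only [Pi.sub_apply]
  unfold Bcore
  nlinarith

noncomputable def Bgamma0 (a b₁ b₂ : ℝ) : ℝ :=
  1 - Real.exp (Real.log (Bfun a b₂ / Bfun a b₁) / (b₂ - b₁))

lemma Bgamma0_mem {a b₁ b₂ : ℝ} (ha : 0 < a) (hb₁ : 0 < b₁) (hb : b₁ < b₂) :
    Bgamma0 a b₁ b₂ ∈ Ioo (0:ℝ) 1 := by
  have h1 : Bfun a b₂ / Bfun a b₁ < 1 :=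
    (div_lt_one (Bfun_pos ha hb₁)).2 (Bfun_lt ha hb₁ hb)
  have h2 : 0 < Bfun a b₂ / Bfun a b₁ :=
    div_pos (Bfun_pos ha (hb₁.trans hb)) (Bfun_pos ha hb₁)
  have h3 : Real.log (Bfun a b₂ / Bfun a b₁) < 0 := Real.log_neg h2 h1
  have h4 : Real.log (Bfun a b₂ / Bfun a b₁) / (b₂ - b₁) < 0 :=
    div_neg_of_neg_of_pos h3 (by linarith)
  have h5 : Real.exp (Real.log (Bfun a b₂ / Bfun a b₁) / (b₂ - b₁)) < 1 :=
    Real.exp_lt_one_iff.2 h4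
  have h6 : 0 < Real.exp (Real.log (Bfun a b₂ / Bfun a b₁) / (b₂ - b₁)) := Real.exp_pos _
  unfold Bgamma0
  exact ⟨by linarith, by linarith⟩

lemma Bgamma0_iff {a b₁ b₂ x : ℝ} (ha : 0 < a) (hb₁ : 0 < b₁) (hb : b₁ < b₂)
    (hx : x ∈ Ioo (0:ℝ) 1) :
    (x < Bgamma0 a b₁ b₂ ↔ Bfun a b₂ < Bfun a b₁ * (1 - x) ^ (b₂ - b₁)) := by
  have h1x : (0:ℝ) < 1 - x := by linarith [hx.2]
  have hB₁ := Bfun_pos ha hb₁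
  have hB₂ := Bfun_pos ha (hb₁.trans hb)
  have hbb : (0:ℝ) < b₂ - b₁ := by linarith
  have e0 : x < Bgamma0 a b₁ b₂ ↔
      Real.exp (Real.log (Bfun a b₂ / Bfun a b₁) / (b₂ - b₁)) < 1 - x := by
    unfold Bgamma0; constructor <;> intro <;> linarith
  rw [e0, ← Real.lt_log_iff_exp_lt h1x, div_lt_iff₀ hbb,
    ← Real.exp_lt_exp, Real.exp_log (div_pos hB₂ hB₁), div_lt_iff₀ hB₁,
    Real.rpow_def_of_pos h1x]
  constructor <;> intro h <;> linarith

lemma Bgamma0_iff' {a b₁ b₂ x : ℝ} (ha : 0 < a) (hb₁ : 0 < b₁) (hb : b₁ < b₂)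
    (hx : x ∈ Ioo (0:ℝ) 1) :
    (Bgamma0 a b₁ b₂ < x ↔ Bfun a b₁ * (1 - x) ^ (b₂ - b₁) < Bfun a b₂) := by
  have h1x : (0:ℝ) < 1 - x := by linarith [hx.2]
  have hB₁ := Bfun_pos ha hb₁
  have hB₂ := Bfun_pos ha (hb₁.trans hb)
  have hbb : (0:ℝ) < b₂ - b₁ := by linarith
  have e0 : Bgamma0 a b₁ b₂ < x ↔
      1 - x < Real.exp (Real.log (Bfun a b₂ / Bfun a b₁) / (b₂ - b₁)) := by
    unfold Bgamma0; constructor <;> intro <;> linarith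
  rw [e0, ← Real.log_lt_iff_lt_exp h1x, lt_div_iff₀ hbb,
    ← Real.exp_lt_exp, Real.exp_log (div_pos hB₂ hB₁), lt_div_iff₀ hB₁,
    Real.rpow_def_of_pos h1x]
  constructor <;> intro h <;> linarith

lemma Bpdf_sub_eq {a b₁ b₂ x : ℝ} (ha : 0 < a) (hb₁ : 0 < b₁) (hb₂ : 0 < b₂)
    (hx : x ∈ Ioo (0:ℝ) 1) :
    Bpdf a b₂ x - Bpdf a b₁ x =
      (x ^ (a - 1) * (1 - x) ^ (b₁ - 1) / (Bfun a b₁ * Bfun a b₂)) *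
        (Bfun a b₁ * (1 - x) ^ (b₂ - b₁) - Bfun a b₂) := by
  have h1x : (0:ℝ) < 1 - x := by linarith [hx.2]
  have hB₁ := (Bfun_pos ha hb₁).ne'
  have hB₂ := (Bfun_pos ha hb₂).ne'
  unfold Bpdf Bcore
  rw [show (b₂ - 1 : ℝ) = (b₂ - b₁) + (b₁ - 1) by ring, Real.rpow_add h1x]
  field_simp

lemma Bpdf_sign_pos {a b₁ b₂ x : ℝ} (ha : 0 < a) (hb₁ : 0 < b₁) (hb : b₁ < b₂)
    (hx : x ∈ Ioo (0:ℝ) 1) (hlt : x < Bgamma0 a b₁ b₂) :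
    0 < Bpdf a b₂ x - Bpdf a b₁ x := by
  have h1x : (0:ℝ) < 1 - x := by linarith [hx.2]
  have h := (Bgamma0_iff ha hb₁ hb hx).1 hlt
  rw [Bpdf_sub_eq ha hb₁ (hb₁.trans hb) hx]
  have hC : 0 < x ^ (a - 1) * (1 - x) ^ (b₁ - 1) / (Bfun a b₁ * Bfun a b₂) :=
    div_pos (mul_pos (Real.rpow_pos_of_pos hx.1 _) (Real.rpow_pos_of_pos h1x _))
      (mul_pos (Bfun_pos ha hb₁) (Bfun_pos ha (hb₁.trans hb)))
  exact mul_pos hC (by linarith)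

lemma Bpdf_sign_neg {a b₁ b₂ x : ℝ} (ha : 0 < a) (hb₁ : 0 < b₁) (hb : b₁ < b₂)
    (hx : x ∈ Ioo (0:ℝ) 1) (hgt : Bgamma0 a b₁ b₂ < x) :
    Bpdf a b₂ x - Bpdf a b₁ x < 0 := by
  have h1x : (0:ℝ) < 1 - x := by linarith [hx.2]
  have h := (Bgamma0_iff' ha hb₁ hb hx).1 hgt
  rw [Bpdf_sub_eq ha hb₁ (hb₁.trans hb) hx]
  have hC : 0 < x ^ (a - 1) * (1 - x) ^ (b₁ - 1) / (Bfun a b₁ * Bfun a b₂) :=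
    div_pos (mul_pos (Real.rpow_pos_of_pos hx.1 _) (Real.rpow_pos_of_pos h1x _))
      (mul_pos (Bfun_pos ha hb₁) (Bfun_pos ha (hb₁.trans hb)))
  exact mul_neg_of_pos_of_neg hC (by linarith)

lemma betaCDF_dominance {a b₁ b₂ t : ℝ} (ha : 0 < a) (hb₁ : 0 < b₁) (hb : b₁ < b₂)
    (ht : t ∈ Ioo (0:ℝ) 1) : betaCDF a b₁ t < betaCDF a b₂ t := by
  have hb₂ : 0 < b₂ := hb₁.trans hb
  have hγ := Bgamma0_mem ha hb₁ hb
  have int1 : IntegrableOn (Bpdf a b₁) (Ioo (0:ℝ) 1) := integrableOn_Bpdf ha hb₁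
  have int2 : IntegrableOn (Bpdf a b₂) (Ioo (0:ℝ) 1) := integrableOn_Bpdf ha hb₂
  rw [← sub_pos]
  rcases le_or_gt t (Bgamma0 a b₁ b₂) with hc | hc
  · rw [betaCDF_eq, betaCDF_eq, ← integral_sub
      (int2.mono_set (Ioo_subset_Ioo le_rfl ht.2.le))
      (int1.mono_set (Ioo_subset_Ioo le_rfl ht.2.le))]
    apply setIntegral_pos_Ioo ht.1
      ((int2.mono_set (Ioo_subset_Ioo le_rfl ht.2.le)).sub
        (int1.mono_set (Ioo_subset_Ioo le_rfl ht.2.le)))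
    intro x hx
    exact Bpdf_sign_pos ha hb₁ hb ⟨hx.1, lt_of_lt_of_le hx.2 (le_trans hc hγ.2.le)⟩
      (lt_of_lt_of_le hx.2 hc)
  · have e1 : betaCDF a b₁ t = 1 - ∫ x in Ioo t 1, Bpdf a b₁ x := by
      have := betaCDF_sub ha hb₁ ht.1.le ht.2.le le_rfl
      rw [betaCDF_one ha hb₁, intervalIntegral.integral_of_le ht.2.le,
        integral_Ioc_eq_integral_Ioo] at this
      linarith
    have e2 : betaCDF a b₂ t = 1 - ∫ x in Ioo t 1, Bpdf a b₂ x := by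
      have := betaCDF_sub ha hb₂ ht.1.le ht.2.le le_rfl
      rw [betaCDF_one ha hb₂, intervalIntegral.integral_of_le ht.2.le,
        integral_Ioc_eq_integral_Ioo] at this
      linarith
    rw [e1, e2, show (1 - ∫ x in Ioo t 1, Bpdf a b₂ x) - (1 - ∫ x in Ioo t 1, Bpdf a b₁ x)
      = (∫ x in Ioo t 1, Bpdf a b₁ x) - ∫ x in Ioo t 1, Bpdf a b₂ x by ring,
      ← integral_sub
        (int1.mono_set (Ioo_subset_Ioo ht.1.le le_rfl))
        (int2.mono_set (Ioo_subset_Ioo ht.1.le le_rfl))]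
    apply setIntegral_pos_Ioo ht.2
      ((int1.mono_set (Ioo_subset_Ioo ht.1.le le_rfl)).sub
        (int2.mono_set (Ioo_subset_Ioo ht.1.le le_rfl)))
    intro x hx
    have := Bpdf_sign_neg ha hb₁ hb ⟨ht.1.trans hx.1, hx.2⟩ (hc.trans hx.1)
    simp only [Pi.sub_apply]
    linarith

noncomputable def Hfun (b₁ b₂ c x : ℝ) : ℝ :=
  (b₂ - 1) * Real.log (1 - c * x) - (b₁ - 1) * Real.log (1 - x)

noncomputable def Hder (b₁ b₂ c x : ℝ) : ℝ :=
  (b₁ - 1) / (1 - x) - c * (b₂ - 1) / (1 - c * x)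

lemma hasDerivAt_Hfun {b₁ b₂ c x : ℝ} (hc : 0 < c) (hc1 : c < 1)
    (hx0 : 0 < x) (hx1 : x < 1) :
    HasDerivAt (Hfun b₁ b₂ c) (Hder b₁ b₂ c x) x := by
  have h1 : (0:ℝ) < 1 - x := by linarith
  have h2 : (0:ℝ) < 1 - c * x := by nlinarith
  have d0 : HasDerivAt (fun y : ℝ => 1 - c * y) (-c) x := by
    simpa using ((hasDerivAt_id x).const_mul c).const_sub 1
  have d0' : HasDerivAt (fun y : ℝ => 1 - y) (-1) x := by
    simpa using (hasDerivAt_id x).const_sub 1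
  have d1 : HasDerivAt (fun y : ℝ => Real.log (1 - c * y)) ((1 - c * x)⁻¹ * (-c)) x :=
    by have := (Real.hasDerivAt_log h2.ne').comp x d0; exact this
  have d2 : HasDerivAt (fun y : ℝ => Real.log (1 - y)) ((1 - x)⁻¹ * (-1)) x :=
    by have := (Real.hasDerivAt_log h1.ne').comp x d0'; exact this
  have := (d1.const_mul (b₂ - 1)).sub (d2.const_mul (b₁ - 1))
  refine this.congr_deriv ?_
  unfold Hder
  field_simp
  ring

lemma Hder_sign {b₁ b₂ c s t : ℝ} (hb : b₁ < b₂) (hc : 0 < c) (hc1 : c < 1)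
    (hs0 : 0 < s) (hst : s ≤ t) (ht1 : t < 1)
    (hpos : 0 < Hder b₁ b₂ c s) : 0 < Hder b₁ b₂ c t := by
  have hs1 : s < 1 := lt_of_le_of_lt hst ht1
  have h1s : (0:ℝ) < 1 - s := by linarith
  have h2s : (0:ℝ) < 1 - c * s := by nlinarith
  have h1t : (0:ℝ) < 1 - t := by linarith
  have ht0 : 0 < t := lt_of_lt_of_le hs0 hst
  have h2t : (0:ℝ) < 1 - c * t := by nlinarith
  have hPs : 0 < (b₁ - 1) * (1 - c * s) - c * (b₂ - 1) * (1 - s) := by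
    have he : Hder b₁ b₂ c s * ((1 - s) * (1 - c * s))
        = (b₁ - 1) * (1 - c * s) - c * (b₂ - 1) * (1 - s) := by
      unfold Hder; rw [div_sub_div _ _ h1s.ne' h2s.ne', div_mul_cancel₀ _ (mul_ne_zero h1s.ne' h2s.ne')]; ring
    nlinarith [mul_pos h1s h2s]
  have hPt : 0 < (b₁ - 1) * (1 - c * t) - c * (b₂ - 1) * (1 - t) := by
    nlinarith [mul_nonneg (mul_nonneg hc.le (sub_nonneg.2 hst)) (sub_nonneg.2 hb.le)]
  have he : Hder b₁ b₂ c t * ((1 - t) * (1 - c * t))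
      = (b₁ - 1) * (1 - c * t) - c * (b₂ - 1) * (1 - t) := by
    unfold Hder; rw [div_sub_div _ _ h1t.ne' h2t.ne', div_mul_cancel₀ _ (mul_ne_zero h1t.ne' h2t.ne')]; ring
  nlinarith [mul_pos h1t h2t]

lemma Hfun_quasi {b₁ b₂ c u v w : ℝ} (hb : b₁ < b₂) (hc : 0 < c) (hc1 : c < 1)
    (hu : 0 < u) (huv : u < v) (hvw : v < w) (hw1 : w < 1) :
    Hfun b₁ b₂ c v ≤ max (Hfun b₁ b₂ c u) (Hfun b₁ b₂ c w) := by
  have hder : ∀ x ∈ Icc u w, HasDerivAt (Hfun b₁ b₂ c) (Hder b₁ b₂ c x) x := fun x hx =>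
    hasDerivAt_Hfun hc hc1 (lt_of_lt_of_le hu hx.1) (lt_of_le_of_lt hx.2 hw1)
  have hcont : ContinuousOn (Hfun b₁ b₂ c) (Icc u w) := fun x hx =>
    ((hder x hx).continuousAt).continuousWithinAt
  by_cases hcase : ∀ x ∈ Icc u v, Hder b₁ b₂ c x ≤ 0
  · -- antitone on [u,v]
    have hanti : AntitoneOn (Hfun b₁ b₂ c) (Icc u v) := by
      apply antitoneOn_of_deriv_nonpos (convex_Icc u v)
        (hcont.mono (Icc_subset_Icc le_rfl hvw.le))
      · intro x hx
        rw [interior_Icc] at hx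
        exact ((hder x ⟨hx.1.le, hx.2.le.trans hvw.le⟩).differentiableAt).differentiableWithinAt
      · intro x hx
        rw [interior_Icc] at hx
        rw [(hder x ⟨hx.1.le, hx.2.le.trans hvw.le⟩).deriv]
        exact hcase x ⟨hx.1.le, hx.2.le⟩
    exact le_max_of_le_left (hanti ⟨le_rfl, huv.le⟩ ⟨huv.le, le_rfl⟩ huv.le)
  · push_neg at hcase
    obtain ⟨x₀, hx₀, hx₀pos⟩ := hcase
    have hmono : MonotoneOn (Hfun b₁ b₂ c) (Icc v w) := by
      apply monotoneOn_of_deriv_nonneg (convex_Icc v w)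
        (hcont.mono (Icc_subset_Icc huv.le le_rfl))
      · intro x hx
        rw [interior_Icc] at hx
        exact ((hder x ⟨huv.le.trans hx.1.le, hx.2.le⟩).differentiableAt).differentiableWithinAt
      · intro x hx
        rw [interior_Icc] at hx
        rw [(hder x ⟨huv.le.trans hx.1.le, hx.2.le⟩).deriv]
        exact (Hder_sign hb hc hc1 (lt_of_lt_of_le hu hx₀.1)
          (hx₀.2.trans hx.1.le) (hx.2.trans hw1) hx₀pos).le
    exact le_max_of_le_right (hmono ⟨le_rfl, hvw.le⟩ ⟨hvw.le, le_rfl⟩ hvw.le)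

lemma Bpdf_ratio_eq {a b₁ b₂ c t : ℝ} (ha : 0 < a) (hb₁ : 0 < b₁) (hb₂ : 0 < b₂)
    (hc : 0 < c) (hc1 : c < 1) (ht : t ∈ Ioo (0:ℝ) 1) :
    Bpdf a b₂ (c * t) * c - Bpdf a b₁ t
      = Bpdf a b₁ t * ((c ^ a * Bfun a b₁ / Bfun a b₂) * Real.exp (Hfun b₁ b₂ c t) - 1) := by
  have h1t : (0:ℝ) < 1 - t := by linarith [ht.2]
  have h1ct : (0:ℝ) < 1 - c * t := by nlinarith [ht.1, ht.2]
  have hB₁ := (Bfun_pos ha hb₁).ne'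
  have hB₂ := (Bfun_pos ha hb₂).ne'
  have e1 : Real.exp ((b₂ - 1) * Real.log (1 - c * t)) = (1 - c * t) ^ (b₂ - 1) := by
    rw [Real.rpow_def_of_pos h1ct, mul_comm]
  have e2 : Real.exp ((b₁ - 1) * Real.log (1 - t)) = (1 - t) ^ (b₁ - 1) := by
    rw [Real.rpow_def_of_pos h1t, mul_comm]
  have e3 : c ^ a = c * c ^ (a - 1) := by
    nth_rewrite 1 [show a = 1 + (a - 1) by ring]
    rw [Real.rpow_add hc, Real.rpow_one]
  have e4 : (c * t) ^ (a - 1) = c ^ (a - 1) * t ^ (a - 1) :=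
    Real.mul_rpow hc.le ht.1.le
  have hpt : ((1:ℝ) - t) ^ (b₁ - 1) ≠ 0 := (Real.rpow_pos_of_pos h1t _).ne'
  unfold Bpdf Bcore Hfun
  rw [Real.exp_sub, e1, e2, e3, e4]
  field_simp

set_option maxHeartbeats 1000000 in
theorem stmt_5 (ξ₁ ξ₂₁ ξ₂₂ : ℝ) (hξ₁ : 0 < ξ₁) (h1 : 1 < ξ₂₁) (h2 : ξ₂₁ < ξ₂₂)
    (G₁ G₂ : ℝ → ℝ)
    (hG₁ : ∀ ω ∈ Set.Ioo (0:ℝ) 1, G₁ ω ∈ Set.Ioo (0:ℝ) 1 ∧ betaCDF ξ₁ ξ₂₁ (G₁ ω) = ω)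
    (hG₂ : ∀ ω ∈ Set.Ioo (0:ℝ) 1, G₂ ω ∈ Set.Ioo (0:ℝ) 1 ∧ betaCDF ξ₁ ξ₂₂ (G₂ ω) = ω) :
    MonotoneOn (fun ω => G₂ ω / G₁ ω) (Set.Ioo (0:ℝ) 1) := by
  set a := ξ₁
  set b₁ := ξ₂₁
  set b₂ := ξ₂₂
  have ha : 0 < a := hξ₁
  have hb₁ : 0 < b₁ := by linarith
  have hb₂ : 0 < b₂ := by linarith
  have hb : b₁ < b₂ := h2
  have SM₁ := betaCDF_strictMonoOn ha hb₁
  have SM₂ := betaCDF_strictMonoOn ha hb₂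
  intro ω hω ω' hω' hle
  rcases eq_or_lt_of_le hle with rfl | hlt
  · exact le_rfl
  obtain ⟨hxmem, hxF⟩ := hG₁ ω hω
  obtain ⟨hymem, hyF⟩ := hG₂ ω hω
  obtain ⟨hxmem', hxF'⟩ := hG₁ ω' hω'
  obtain ⟨hymem', hyF'⟩ := hG₂ ω' hω'
  set x := G₁ ω with hxdef
  set y := G₂ ω with hydef
  set x' := G₁ ω' with hxdef'
  set y' := G₂ ω' with hydef'
  have hxI : x ∈ Icc (0:ℝ) 1 := Ioo_subset_Icc_self hxmem
  have hyI : y ∈ Icc (0:ℝ) 1 := Ioo_subset_Icc_self hymem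
  have hxI' : x' ∈ Icc (0:ℝ) 1 := Ioo_subset_Icc_self hxmem'
  have hyI' : y' ∈ Icc (0:ℝ) 1 := Ioo_subset_Icc_self hymem'
  -- x < x'
  have hxx : x < x' := by
    by_contra hcon
    push_neg at hcon
    have := SM₁.le_iff_le hxI' hxI |>.2 hcon
    rw [hxF, hxF'] at this
    linarith
  -- y' < x'  (strict dominance)
  have hyx' : y' < x' := by
    have hdom := betaCDF_dominance ha hb₁ hb hxmem'
    have : betaCDF a b₂ y' < betaCDF a b₂ x' := by rw [hyF', ← hxF']; exact hdom
    exact (SM₂.lt_iff_lt hyI' hxI').1 this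
  set c := y' / x' with hcdef
  have hx'0 : 0 < x' := hxmem'.1
  have hc : 0 < c := div_pos hymem'.1 hx'0
  have hc1 : c < 1 := (div_lt_one hx'0).2 hyx'
  -- suffices y ≤ c * x
  have hcx' : c * x' = y' := by rw [hcdef]; field_simp
  rw [div_le_div_iff₀ hxmem.1 hx'0]
  -- goal : y * x' ≤ y' * x
  by_contra hcon
  push_neg at hcon
  have hycx : c * x < y := by
    rw [hcdef]
    rw [div_mul_eq_mul_div, div_lt_iff₀ hx'0]
    linarith
  -- define g
  set g : ℝ → ℝ := fun t => betaCDF a b₂ (c * t) - betaCDF a b₁ t with hgdef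
  have hg0 : g 0 = 0 := by simp [hgdef, betaCDF_zero]
  have hgx : g x < 0 := by
    have hcx0 : (0:ℝ) ≤ c * x := le_of_lt (mul_pos hc hxmem.1)
    have hcx1 : c * x ≤ 1 := by nlinarith [hymem.2]
    have h2' : betaCDF a b₂ (c * x) < betaCDF a b₂ y :=
      SM₂ ⟨hcx0, hcx1⟩ hyI hycx
    rw [hyF, ← hxF] at h2'
    simp only [hgdef]
    linarith
  have hgx' : g x' = 0 := by
    simp only [hgdef, hcx', hyF', hxF']
    ring
  have hg1 : g 1 < 0 := by
    have : betaCDF a b₂ c < betaCDF a b₂ 1 :=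
      SM₂ ⟨hc.le, hc1.le⟩ ⟨zero_le_one, le_rfl⟩ hc1
    rw [betaCDF_one ha hb₂] at this
    simp only [hgdef, mul_one, betaCDF_one ha hb₁]
    linarith
  -- continuity of g on Icc 0 1
  have hgcont : ContinuousOn g (Icc (0:ℝ) 1) := by
    apply ContinuousOn.sub
    · apply (continuousOn_betaCDF ha hb₂).comp
        ((continuous_const.mul continuous_id).continuousOn)
      intro t htI
      show c * t ∈ Icc (0:ℝ) 1
      exact ⟨mul_nonneg hc.le htI.1, by nlinarith [htI.1, htI.2]⟩
    · exact continuousOn_betaCDF ha hb₁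
  -- derivative of g
  set dd : ℝ → ℝ := fun t => Bpdf a b₂ (c * t) * c - Bpdf a b₁ t with hdddef
  have hgder : ∀ t ∈ Ioo (0:ℝ) 1, HasDerivAt g (dd t) t := by
    intro t htI
    have hctI : c * t ∈ Ioo (0:ℝ) 1 :=
      ⟨mul_pos hc htI.1, by nlinarith [htI.2]⟩
    have h2' := (hasDerivAt_betaCDF ha hb₂ hctI).comp t
      ((hasDerivAt_id t).const_mul c)
    simp only [mul_one] at h2'
    exact h2'.sub (hasDerivAt_betaCDF ha hb₁ htI)
  -- MVT applications
  have hKpos : 0 < c ^ a * Bfun a b₁ / Bfun a b₂ :=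
    div_pos (mul_pos (Real.rpow_pos_of_pos hc _) (Bfun_pos ha hb₁)) (Bfun_pos ha hb₂)
  have sign_lt : ∀ t ∈ Ioo (0:ℝ) 1, dd t < 0 →
      (c ^ a * Bfun a b₁ / Bfun a b₂) * Real.exp (Hfun b₁ b₂ c t) < 1 := by
    intro t htI hdd
    rw [hdddef] at hdd
    simp only at hdd
    rw [Bpdf_ratio_eq ha hb₁ hb₂ hc hc1 htI] at hdd
    by_contra hcon2
    push_neg at hcon2
    have h0 := Bpdf_pos ha hb₁ htI
    have : 0 ≤ Bpdf a b₁ t * ((c ^ a * Bfun a b₁ / Bfun a b₂) * Real.exp (Hfun b₁ b₂ c t) - 1) :=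
      mul_nonneg h0.le (by linarith)
    linarith
  have sign_gt : ∀ t ∈ Ioo (0:ℝ) 1, 0 < dd t →
      1 < (c ^ a * Bfun a b₁ / Bfun a b₂) * Real.exp (Hfun b₁ b₂ c t) := by
    intro t htI hdd
    rw [hdddef] at hdd
    simp only at hdd
    rw [Bpdf_ratio_eq ha hb₁ hb₂ hc hc1 htI] at hdd
    by_contra hcon2
    push_neg at hcon2
    have h0 := Bpdf_pos ha hb₁ htI
    have : Bpdf a b₁ t * ((c ^ a * Bfun a b₁ / Bfun a b₂) * Real.exp (Hfun b₁ b₂ c t) - 1) ≤ 0 :=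
      mul_nonpos_iff.2 (Or.inl ⟨h0.le, by linarith⟩)
    linarith
  obtain ⟨u, huI, hu⟩ := exists_hasDerivAt_eq_slope g dd hxmem.1
    (hgcont.mono (Icc_subset_Icc le_rfl hxI.2))
    (fun t htI => hgder t ⟨htI.1, lt_trans htI.2 hxmem.2⟩)
  obtain ⟨v, hvI, hv⟩ := exists_hasDerivAt_eq_slope g dd hxx
    (hgcont.mono (Icc_subset_Icc hxI.1 hxI'.2))
    (fun t htI => hgder t ⟨lt_trans hxmem.1 htI.1, lt_trans htI.2 hxmem'.2⟩)
  obtain ⟨w, hwI, hw⟩ := exists_hasDerivAt_eq_slope g dd hxmem'.2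
    (hgcont.mono (Icc_subset_Icc hxI'.1 le_rfl))
    (fun t htI => hgder t ⟨lt_trans hxmem'.1 htI.1, htI.2⟩)
  have hddu : dd u < 0 := by
    rw [hu, hg0]
    apply div_neg_of_neg_of_pos <;> [linarith; linarith [hxmem.1]]
  have hddv : 0 < dd v := by
    rw [hv, hgx']
    apply div_pos <;> linarith
  have hddw : dd w < 0 := by
    rw [hw, hgx']
    apply div_neg_of_neg_of_pos <;> linarith [hxmem'.2]
  have huI1 : u ∈ Ioo (0:ℝ) 1 := ⟨huI.1, lt_trans huI.2 hxmem.2⟩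
  have hvI1 : v ∈ Ioo (0:ℝ) 1 := ⟨lt_trans hxmem.1 hvI.1, lt_trans hvI.2 hxmem'.2⟩
  have hwI1 : w ∈ Ioo (0:ℝ) 1 := ⟨lt_trans hxmem'.1 hwI.1, hwI.2⟩
  have h1' := sign_lt u huI1 hddu
  have h2' := sign_gt v hvI1 hddv
  have h3' := sign_lt w hwI1 hddw
  have hHu : Hfun b₁ b₂ c u < Hfun b₁ b₂ c v := by
    have : Real.exp (Hfun b₁ b₂ c u) < Real.exp (Hfun b₁ b₂ c v) := by
      nlinarith [Real.exp_pos (Hfun b₁ b₂ c u), Real.exp_pos (Hfun b₁ b₂ c v)]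
    exact Real.exp_lt_exp.1 this
  have hHw : Hfun b₁ b₂ c w < Hfun b₁ b₂ c v := by
    have : Real.exp (Hfun b₁ b₂ c w) < Real.exp (Hfun b₁ b₂ c v) := by
      nlinarith [Real.exp_pos (Hfun b₁ b₂ c w), Real.exp_pos (Hfun b₁ b₂ c v)]
    exact Real.exp_lt_exp.1 this
  have hquasi := Hfun_quasi hb hc hc1 huI1.1 (lt_trans huI.2 hvI.1)
    (lt_trans hvI.2 hwI.1) hwI1.2
  rcases le_max_iff.1 hquasi with h | h <;> linarith
end

section
/- Let h be a positive integer and ξ > 1. Then the function τ ↦ Γ((h+1)τ)Γ(τ+ξ)/(Γ(τ)Γ((h+1)τ+ξ)) is strictly decreasing on (0,∞). If ξ = 1, the function is constant in τ. -/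
open Real Filter Finset Topology

noncomputable def myFk (C ξ : ℝ) (k : ℕ) (τ : ℝ) : ℝ :=
  Real.log (τ + k) + Real.log (C*τ + ξ + k) - Real.log (τ + ξ + k) - Real.log (C*τ + k)

noncomputable def myFk' (C ξ : ℝ) (k : ℕ) (τ : ℝ) : ℝ :=
  (1/(τ + k) - 1/(τ + ξ + k)) - (C/(C*τ + k) - C/(C*τ + ξ + k))

lemma hasDerivAt_myFk {C ξ : ℝ} (hC : 1 ≤ C) (hξ : 0 < ξ) (k : ℕ) {τ : ℝ} (hτ : 0 < τ) :
    HasDerivAt (myFk C ξ k) (myFk' C ξ k τ) τ := by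
  have hk : (0:ℝ) ≤ k := Nat.cast_nonneg k
  have h1 : (0:ℝ) < τ + k := by linarith
  have h2 : (0:ℝ) < C*τ + ξ + k := by nlinarith
  have h3 : (0:ℝ) < τ + ξ + k := by linarith
  have h4 : (0:ℝ) < C*τ + k := by nlinarith
  have d1 : HasDerivAt (fun x : ℝ => Real.log (x + k)) (1/(τ+k)) τ := by
    simpa using ((hasDerivAt_id τ).add_const (k:ℝ)).log h1.ne'
  have d2 : HasDerivAt (fun x : ℝ => Real.log (C*x + ξ + k)) (C/(C*τ+ξ+k)) τ := by
    simpa using ((((hasDerivAt_id τ).const_mul C).add_const ξ).add_const (k:ℝ)).log h2.ne'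
  have d3 : HasDerivAt (fun x : ℝ => Real.log (x + ξ + k)) (1/(τ+ξ+k)) τ := by
    simpa using (((hasDerivAt_id τ).add_const ξ).add_const (k:ℝ)).log h3.ne'
  have d4 : HasDerivAt (fun x : ℝ => Real.log (C*x + k)) (C/(C*τ+k)) τ := by
    simpa using (((hasDerivAt_id τ).const_mul C).add_const (k:ℝ)).log h4.ne'
  have := ((d1.add d2).sub d3).sub d4
  refine this.congr_deriv ?_
  unfold myFk'
  ring

lemma mySumInvSq {r : ℝ} (hr : 0 < r) : Summable (fun k : ℕ => ((r + k)^2)⁻¹) := by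
  set m : ℝ := min r (1/2) with hm
  have hm0 : 0 < m := lt_min hr (by norm_num)
  have hbase : Summable (fun k : ℕ => (((k:ℝ)+1)^2)⁻¹) := by
    have h0 : Summable (fun n : ℕ => ((n:ℝ)^2)⁻¹) := by
      have := summable_one_div_nat_pow.mpr (le_refl 2)
      simpa [one_div] using this
    have := (summable_nat_add_iff 1).mpr h0
    simpa [Nat.cast_add] using this
  refine Summable.of_nonneg_of_le (fun k => by positivity) (fun k => ?_) (hbase.mul_left ((m^2)⁻¹))

  have hk : (0:ℝ) ≤ k := Nat.cast_nonneg k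
  have h1 : m * ((k:ℝ)+1) ≤ r + k := by
    have hmr : m ≤ r := min_le_left _ _
    have hmh : m ≤ 1/2 := min_le_right _ _
    nlinarith
  have h2 : (0:ℝ) < m * ((k:ℝ)+1) := by positivity
  have h3 : (m * ((k:ℝ)+1))^2 ≤ (r+k)^2 := by nlinarith
  calc ((r + k)^2)⁻¹ ≤ ((m * ((k:ℝ)+1))^2)⁻¹ := by
        apply inv_anti₀ (by positivity) h3
    _ = (m^2)⁻¹ * (((k:ℝ)+1)^2)⁻¹ := by rw [mul_pow, mul_inv]

lemma myD_mono {p q δ : ℝ} (hp : 0 < p) (hpq : p ≤ q) (hδ : 0 < δ) :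
    1/q - 1/(q+δ) ≤ 1/p - 1/(p+δ) := by
  have hq : 0 < q := lt_of_lt_of_le hp hpq
  have e1 : 1/p - 1/(p+δ) = δ/(p*(p+δ)) := by field_simp; ring
  have e2 : 1/q - 1/(q+δ) = δ/(q*(q+δ)) := by field_simp; ring
  rw [e1, e2]
  apply div_le_div_of_nonneg_left hδ.le (by positivity) (by nlinarith)

lemma myD_strict {p q δ : ℝ} (hp : 0 < p) (hpq : p < q) (hδ : 0 < δ) :
    1/q - 1/(q+δ) < 1/p - 1/(p+δ) := by
  have hq : 0 < q := lt_trans hp hpq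
  have e1 : 1/p - 1/(p+δ) = δ/(p*(p+δ)) := by field_simp; ring
  have e2 : 1/q - 1/(q+δ) = δ/(q*(q+δ)) := by field_simp; ring
  rw [e1, e2]
  apply div_lt_div_of_pos_left hδ (by positivity) (by nlinarith)

lemma myA_nonneg_summable {ξ τ : ℝ} (hξ : 0 < ξ) (hτ : 0 < τ) :
    Summable (fun k : ℕ => 1/(τ + k) - 1/(τ + ξ + k)) := by
  refine Summable.of_nonneg_of_le (f := fun k : ℕ => ξ * ((τ+k)^2)⁻¹) (fun k => ?_) (fun k => ?_)
    ((mySumInvSq hτ).mul_left ξ)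
  · have hk : (0:ℝ) ≤ k := Nat.cast_nonneg k
    have h1 : (0:ℝ) < τ + k := by linarith
    rw [sub_nonneg]
    apply one_div_le_one_div_of_le h1 (by linarith)
  · have hk : (0:ℝ) ≤ k := Nat.cast_nonneg k
    have h1 : (0:ℝ) < τ + k := by linarith
    have h3 : (0:ℝ) < τ + ξ + k := by linarith
    have e : 1/(τ + k) - 1/(τ + ξ + k) = ξ / ((τ+k) * (τ+ξ+k)) := by field_simp; ring
    rw [e, div_eq_mul_inv]
    apply mul_le_mul_of_nonneg_left _ hξ.le
    apply inv_anti₀ (by positivity) (by nlinarith)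

lemma myTsumFk'_neg {c : ℕ} {ξ τ : ℝ} (hc : 2 ≤ c) (hξ : 1 < ξ) (hτ : 0 < τ) :
    ∑' k, myFk' (c:ℝ) ξ k τ < 0 := by
  have hξ0 : (0:ℝ) < ξ := by linarith
  set C : ℝ := (c:ℝ) with hCdef
  have hC1 : (1:ℝ) ≤ C := by rw [hCdef]; exact_mod_cast Nat.one_le_of_lt hc
  have hC0 : (0:ℝ) < C := by linarith
  set A : ℕ → ℝ := fun k => 1/(τ + k) - 1/(τ + ξ + k) with hA
  set B : ℕ → ℝ := fun k => C/(C*τ + k) - C/(C*τ + ξ + k) with hB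
  have hBeq : ∀ k : ℕ, B k = 1/(τ + (k:ℝ)/C) - 1/(τ + (k:ℝ)/C + ξ/C) := by
    intro k
    have hk : (0:ℝ) ≤ k := Nat.cast_nonneg k
    have h4 : (0:ℝ) < C*τ + k := by nlinarith
    have h2 : (0:ℝ) < C*τ + ξ + k := by nlinarith
    have h5 : (0:ℝ) < τ + (k:ℝ)/C := by positivity
    have h6 : (0:ℝ) < τ + (k:ℝ)/C + ξ/C := by positivity
    simp only [hB]
    field_simp
    ring
  have hBsummable : Summable B := by
    have h0 := myA_nonneg_summable (τ := C*τ) hξ0 (by positivity)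
    have h2 : Summable (fun k : ℕ => C * (1/(C*τ + k) - 1/(C*τ + ξ + k))) := h0.mul_left C
    apply h2.congr
    intro k
    simp only [hB]
    ring
  have hAsummable : Summable A := myA_nonneg_summable hξ0 hτ
  have hcξ : (c:ℝ)*(ξ/C) = ξ := by rw [hCdef]; field_simp
  have hAtel : ∀ m : ℕ, A m = ∑ j ∈ range c,
      (1/(τ + (m:ℝ) + (j:ℝ)*(ξ/C)) - 1/(τ + (m:ℝ) + (j:ℝ)*(ξ/C) + ξ/C)) := by
    intro m
    have h : ∀ j : ℕ, (1/(τ + (m:ℝ) + (j:ℝ)*(ξ/C)) - 1/(τ + (m:ℝ) + (j:ℝ)*(ξ/C) + ξ/C))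
        = (fun j : ℕ => 1/(τ + (m:ℝ) + (j:ℝ)*(ξ/C))) j - (fun j : ℕ => 1/(τ + (m:ℝ) + (j:ℝ)*(ξ/C))) (j+1) := by
      intro j
      simp only
      congr 2
      push_cast
      ring
    rw [Finset.sum_congr rfl (fun j _ => h j), Finset.sum_range_sub']
    simp only [hA, Nat.cast_zero, zero_mul, add_zero, hcξ]
    ring_nf
  have hjle : ∀ j : ℕ, (j:ℝ)/C ≤ (j:ℝ)*(ξ/C) := by
    intro j
    have hj0 : (0:ℝ) ≤ j := Nat.cast_nonneg j
    have h := mul_nonneg (mul_nonneg hj0 (by linarith : (0:ℝ) ≤ ξ - 1)) (inv_pos.mpr hC0).le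
    rw [div_eq_mul_inv, div_eq_mul_inv, ← mul_assoc]
    nlinarith
  have hkey : ∀ m j : ℕ, (1/(τ + (m:ℝ) + (j:ℝ)*(ξ/C)) - 1/(τ + (m:ℝ) + (j:ℝ)*(ξ/C) + ξ/C))
      ≤ B (c*m + j) := by
    intro m j
    have hm : (0:ℝ) ≤ m := Nat.cast_nonneg m
    have hj0 : (0:ℝ) ≤ j := Nat.cast_nonneg j
    rw [hBeq]
    have hcast : ((c*m + j : ℕ):ℝ)/C = (m:ℝ) + (j:ℝ)/C := by
      push_cast
      rw [hCdef]
      field_simp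
    rw [hcast, ← add_assoc]
    apply myD_mono (by positivity) (by have := hjle j; linarith) (by positivity)
  have hgroup : ∀ m : ℕ, A m ≤ ∑ j ∈ range c, B (c*m + j) := by
    intro m
    rw [hAtel m]
    exact Finset.sum_le_sum (fun j _ => hkey m j)
  set ε : ℝ := (1/(τ + 1/C) - 1/(τ + 1/C + ξ/C))
      - (1/(τ + (0:ℝ) + (1:ℝ)*(ξ/C)) - 1/(τ + (0:ℝ) + (1:ℝ)*(ξ/C) + ξ/C)) with hε
  have hεpos : 0 < ε := by
    rw [hε]
    have h1 : (0:ℝ) < τ + 1/C := by positivity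
    have h2 : τ + 1/C < τ + (0:ℝ) + 1*(ξ/C) := by
      have : 1/C < ξ/C := by rw [div_lt_div_iff₀ hC0 hC0]; nlinarith
      linarith
    have := myD_strict h1 h2 (by positivity : (0:ℝ) < ξ/C)
    linarith
  -- strict group inequality at m = 0
  have hstrict : A 0 + ε ≤ ∑ j ∈ range c, B (c*0 + j) := by
    set t : ℕ → ℝ := fun j =>
      1/(τ + ((0:ℕ):ℝ) + (j:ℝ)*(ξ/C)) - 1/(τ + ((0:ℕ):ℝ) + (j:ℝ)*(ξ/C) + ξ/C) with ht
    set s : ℕ → ℝ := fun j => B (c*0 + j) - t j with hs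
    have hsnonneg : ∀ j ∈ range c, 0 ≤ s j := by
      intro j _
      rw [hs]
      simp only
      rw [sub_nonneg, ht]
      exact hkey 0 j
    have hs1 : ε ≤ s 1 := by
      apply le_of_eq
      rw [hs]
      simp only [ht]
      rw [hBeq, hε]
      push_cast [Nat.mul_zero]
      ring
    have hsum : ∑ j ∈ range c, B (c*0 + j) = ∑ j ∈ range c, t j + ∑ j ∈ range c, s j := by
      rw [← Finset.sum_add_distrib]
      apply Finset.sum_congr rfl
      intro j _
      rw [hs]
      ring
    have h1mem : (1:ℕ) ∈ range c := Finset.mem_range.mpr (by omega)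
    have hsingle : s 1 ≤ ∑ j ∈ range c, s j := Finset.single_le_sum hsnonneg h1mem
    have hA0 : A 0 = ∑ j ∈ range c, t j := by
      rw [hAtel 0]
    linarith
  -- partial sums inequality
  have hpartial : ∀ M : ℕ, 1 ≤ M →
      ∑ m ∈ range M, A m + ε ≤ ∑ k ∈ range (c*M), B k := by
    intro M hM
    induction M, hM using Nat.le_induction with
    | base =>
      rw [mul_one]
      have : ∑ k ∈ range c, B k = ∑ j ∈ range c, B (c*0 + j) := by
        apply Finset.sum_congr rfl
        intro j _
        congr 1
        omega
      rw [this, Finset.sum_range_one]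
      exact hstrict
    | succ M hM ih =>
      have hr : c*(M+1) = c*M + c := by ring
      have e1 : ∑ k ∈ range (c*M + c), B k
          = ∑ k ∈ range (c*M), B k + ∑ j ∈ range c, B (c*M + j) := Finset.sum_range_add B (c*M) c
      have e2 : ∑ m ∈ range (M+1), A m = ∑ m ∈ range M, A m + A M := Finset.sum_range_succ A M
      rw [hr, e1, e2]
      linarith [hgroup M]
  -- pass to the limit
  have htend1 : Tendsto (fun M => ∑ m ∈ range M, A m + ε) atTop (𝓝 (∑' m, A m + ε)) :=
    hAsummable.hasSum.tendsto_sum_nat.add_const ε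
  have htend2 : Tendsto (fun M => ∑ k ∈ range (c*M), B k) atTop (𝓝 (∑' k, B k)) := by
    apply hBsummable.hasSum.tendsto_sum_nat.comp
    apply tendsto_atTop_mono (fun M => Nat.le_mul_of_pos_left M (by omega : 0 < c)) tendsto_id
  have hle : ∑' m, A m + ε ≤ ∑' k, B k := by
    apply le_of_tendsto_of_tendsto htend1 htend2
    filter_upwards [eventually_ge_atTop 1] with M hM
    exact hpartial M hM
  have htsub : ∑' k, myFk' (c:ℝ) ξ k τ = ∑' m, A m - ∑' k, B k := by
    rw [← Summable.tsum_sub hAsummable hBsummable]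
    apply tsum_congr
    intro k
    simp only [myFk', hA, hB, Pi.sub_apply, hCdef]
  rw [htsub]
  linarith

lemma myFk'_bound {C ξ lo y : ℝ} (hC : 1 ≤ C) (hξ : 0 < ξ) (hlo : 0 < lo) (hy : lo ≤ y)
    (k : ℕ) : ‖myFk' C ξ k y‖ ≤ (1+C)*ξ*((lo+k)^2)⁻¹ := by
  have hk : (0:ℝ) ≤ k := Nat.cast_nonneg k
  have hy0 : 0 < y := lt_of_lt_of_le hlo hy
  have h1 : (0:ℝ) < y + k := by linarith
  have h3 : (0:ℝ) < y + ξ + k := by linarith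
  have h4 : (0:ℝ) < C*y + k := by nlinarith
  have h2 : (0:ℝ) < C*y + ξ + k := by nlinarith
  have hl : (0:ℝ) < lo + k := by linarith
  have eA : 1/(y + k) - 1/(y + ξ + k) = ξ / ((y+k) * (y+ξ+k)) := by field_simp; ring
  have eB : C/(C*y + k) - C/(C*y + ξ + k) = C*ξ / ((C*y+k) * (C*y+ξ+k)) := by
    field_simp; ring
  have hAb : ξ / ((y+k) * (y+ξ+k)) ≤ ξ * ((lo+k)^2)⁻¹ := by
    rw [div_eq_mul_inv]
    apply mul_le_mul_of_nonneg_left _ hξ.le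
    apply inv_anti₀ (by positivity) (by nlinarith)
  have hCy : y ≤ C*y := by nlinarith
  have hBb : C*ξ / ((C*y+k) * (C*y+ξ+k)) ≤ C*ξ * ((lo+k)^2)⁻¹ := by
    rw [div_eq_mul_inv]
    apply mul_le_mul_of_nonneg_left _ (by positivity)
    apply inv_anti₀ (by positivity)
    nlinarith [mul_le_mul (by linarith : lo+(k:ℝ) ≤ C*y+k) (by linarith : lo+(k:ℝ) ≤ C*y+ξ+k) (by positivity : (0:ℝ) ≤ lo+(k:ℝ)) (by positivity : (0:ℝ) ≤ C*y+(k:ℝ))]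
  have hA0 : 0 ≤ ξ / ((y+k) * (y+ξ+k)) := by positivity
  have hB0 : 0 ≤ C*ξ / ((C*y+k) * (C*y+ξ+k)) := by positivity
  rw [Real.norm_eq_abs, abs_le]
  unfold myFk'
  rw [eA, eB]
  have hp1 : (0:ℝ) ≤ ξ * ((lo+k)^2)⁻¹ := by positivity
  have hp2 : (0:ℝ) ≤ C * ξ * ((lo+k)^2)⁻¹ := by positivity
  constructor <;> linarith

lemma myFk_bound {C ξ τ : ℝ} (hC : 1 ≤ C) (hξ : 0 < ξ) (hτ : 0 < τ) (k : ℕ) :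
    ‖myFk C ξ k τ‖ ≤ C*τ*ξ*((τ+k)^2)⁻¹ := by
  have hk : (0:ℝ) ≤ k := Nat.cast_nonneg k
  have h1 : (0:ℝ) < τ + k := by linarith
  have h3 : (0:ℝ) < τ + ξ + k := by linarith
  have hCy : τ ≤ C*τ := by nlinarith
  have h4 : (0:ℝ) < C*τ + k := by linarith
  have h2 : (0:ℝ) < C*τ + ξ + k := by linarith
  set X : ℝ := (τ+k) * (C*τ+ξ+k) with hX
  set Y : ℝ := (τ+ξ+k) * (C*τ+k) with hY
  have hX0 : 0 < X := by positivity
  have hY0 : 0 < Y := by positivity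
  have hYX : Y - X = (C-1)*τ*ξ := by rw [hX, hY]; ring
  have hXY : X ≤ Y := by nlinarith
  have heq : myFk C ξ k τ = Real.log X - Real.log Y := by
    unfold myFk
    rw [hX, hY, Real.log_mul h1.ne' h2.ne', Real.log_mul h3.ne' h4.ne']
    ring
  have hle : Real.log X ≤ Real.log Y := Real.log_le_log hX0 hXY
  have habs : ‖myFk C ξ k τ‖ = Real.log Y - Real.log X := by
    rw [heq, Real.norm_eq_abs, abs_sub_comm, abs_of_nonneg (by linarith)]
  rw [habs, ← Real.log_div hY0.ne' hX0.ne']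
  have h5 : Real.log (Y/X) ≤ Y/X - 1 := Real.log_le_sub_one_of_pos (by positivity)
  have h6 : Y/X - 1 = (Y - X)/X := by field_simp
  have h7 : (Y-X)/X ≤ C*τ*ξ*((τ+k)^2)⁻¹ := by
    rw [hYX, div_eq_mul_inv]
    have hnum : (C-1)*τ*ξ ≤ C*τ*ξ := by nlinarith
    have hden : ((τ+k)^2) ≤ X := by rw [hX]; nlinarith
    have hinv : X⁻¹ ≤ ((τ+k)^2)⁻¹ := inv_anti₀ (by positivity) hden
    have : (0:ℝ) ≤ (C-1)*τ*ξ := by nlinarith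
    calc (C-1)*τ*ξ * X⁻¹ ≤ (C-1)*τ*ξ * ((τ+k)^2)⁻¹ := by
          apply mul_le_mul_of_nonneg_left hinv this
      _ ≤ C*τ*ξ*((τ+k)^2)⁻¹ := by
          apply mul_le_mul_of_nonneg_right hnum (by positivity)
  linarith

lemma summable_myFk {C ξ τ : ℝ} (hC : 1 ≤ C) (hξ : 0 < ξ) (hτ : 0 < τ) :
    Summable (fun k : ℕ => myFk C ξ k τ) := by
  apply Summable.of_norm_bounded ((mySumInvSq hτ).mul_left (C*τ*ξ))
  exact fun k => myFk_bound hC hξ hτ k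

lemma hasDerivAt_myg {C ξ : ℝ} (hC : 1 ≤ C) (hξ : 0 < ξ) {τ : ℝ} (hτ : 0 < τ) :
    HasDerivAt (fun z => ∑' k, myFk C ξ k z) (∑' k, myFk' C ξ k τ) τ := by
  have hlo : 0 < τ/2 := by linarith
  exact hasDerivAt_tsum_of_isPreconnected (u := fun k : ℕ => (1+C)*ξ*((τ/2+k)^2)⁻¹)
    (t := Set.Ioi (τ/2)) (y₀ := τ) ((mySumInvSq hlo).mul_left ((1+C)*ξ)) isOpen_Ioi
    (convex_Ioi (τ/2)).isPreconnected
    (fun k y hy => hasDerivAt_myFk hC hξ k (lt_trans hlo hy))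
    (fun k y hy => myFk'_bound hC hξ hlo (le_of_lt hy) k)
    (Set.mem_Ioi.mpr (by linarith)) (summable_myFk hC hξ hτ)
    (Set.mem_Ioi.mpr (by linarith))

lemma myGammaSeq_eq {c : ℕ} {ξ τ : ℝ} (hc : 1 ≤ c) (hξ : 0 < ξ) (hτ : 0 < τ)
    {n : ℕ} (hn : 1 ≤ n) :
    Real.GammaSeq ((c:ℝ)*τ) n * Real.GammaSeq (τ+ξ) n
      / (Real.GammaSeq τ n * Real.GammaSeq ((c:ℝ)*τ+ξ) n)
    = (∏ j ∈ range (n+1), (τ + j)) * (∏ j ∈ range (n+1), ((c:ℝ)*τ + ξ + j))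
      / ((∏ j ∈ range (n+1), (τ + ξ + j)) * (∏ j ∈ range (n+1), ((c:ℝ)*τ + j))) := by
  set C : ℝ := (c:ℝ) with hC
  have hC1 : (1:ℝ) ≤ C := by rw [hC]; exact_mod_cast hc
  have hn0 : (0:ℝ) < n := by exact_mod_cast hn
  have key : (n:ℝ)^(C*τ) * (n:ℝ)^(τ+ξ) = (n:ℝ)^τ * (n:ℝ)^(C*τ+ξ) := by
    rw [← Real.rpow_add hn0, ← Real.rpow_add hn0]
    ring_nf
  have hp1 : 0 < ∏ j ∈ range (n+1), (τ + (j:ℝ)) := by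
    apply Finset.prod_pos; intro j _; have : (0:ℝ) ≤ j := Nat.cast_nonneg j; linarith
  have hp2 : 0 < ∏ j ∈ range (n+1), (τ + ξ + (j:ℝ)) := by
    apply Finset.prod_pos; intro j _; have : (0:ℝ) ≤ j := Nat.cast_nonneg j; linarith
  have hp3 : 0 < ∏ j ∈ range (n+1), (C*τ + (j:ℝ)) := by
    apply Finset.prod_pos; intro j _; have : (0:ℝ) ≤ j := Nat.cast_nonneg j; nlinarith
  have hp4 : 0 < ∏ j ∈ range (n+1), (C*τ + ξ + (j:ℝ)) := by
    apply Finset.prod_pos; intro j _; have : (0:ℝ) ≤ j := Nat.cast_nonneg j; nlinarith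
  have hfact : (0:ℝ) < (Nat.factorial n : ℝ) := by exact_mod_cast Nat.factorial_pos n
  have hr1 : (0:ℝ) < (n:ℝ)^τ := Real.rpow_pos_of_pos hn0 τ
  have hr2 : (0:ℝ) < (n:ℝ)^(C*τ+ξ) := Real.rpow_pos_of_pos hn0 _
  have hr3 : (0:ℝ) < (n:ℝ)^(C*τ) := Real.rpow_pos_of_pos hn0 _
  have hr4 : (0:ℝ) < (n:ℝ)^(τ+ξ) := Real.rpow_pos_of_pos hn0 _
  simp only [Real.GammaSeq]
  rw [div_mul_div_comm, div_mul_div_comm, div_div_div_eq]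
  rw [div_eq_div_iff (by positivity) (by positivity)]
  linear_combination ((Nat.factorial n : ℝ))^2 * (∏ j ∈ range (n+1), (τ + (j:ℝ)))
    * (∏ j ∈ range (n+1), (τ + ξ + (j:ℝ))) * (∏ j ∈ range (n+1), (C*τ + (j:ℝ)))
    * (∏ j ∈ range (n+1), (C*τ + ξ + (j:ℝ))) * key

lemma myExpSum_eq {C ξ τ : ℝ} (hC : 1 ≤ C) (hξ : 0 < ξ) (hτ : 0 < τ) (n : ℕ) :
    Real.exp (∑ k ∈ range (n+1), myFk C ξ k τ)
      = (∏ j ∈ range (n+1), (τ + j)) * (∏ j ∈ range (n+1), (C*τ + ξ + j))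
        / ((∏ j ∈ range (n+1), (τ + ξ + j)) * (∏ j ∈ range (n+1), (C*τ + j))) := by
  rw [Real.exp_sum]
  have hterm : ∀ j ∈ range (n+1), Real.exp (myFk C ξ j τ)
      = (τ + j) * (C*τ + ξ + j) / ((τ + ξ + j) * (C*τ + j)) := by
    intro j _
    have hj : (0:ℝ) ≤ j := Nat.cast_nonneg j
    have h1 : (0:ℝ) < τ + j := by linarith
    have h3 : (0:ℝ) < τ + ξ + j := by linarith
    have h4 : (0:ℝ) < C*τ + j := by nlinarith
    have h2 : (0:ℝ) < C*τ + ξ + j := by nlinarith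
    unfold myFk
    rw [Real.exp_sub, Real.exp_sub, Real.exp_add, Real.exp_log h1, Real.exp_log h2,
      Real.exp_log h3, Real.exp_log h4]
    field_simp
  rw [Finset.prod_congr rfl hterm, Finset.prod_div_distrib, Finset.prod_mul_distrib,
    Finset.prod_mul_distrib]

lemma myGamma_eq_exp {c : ℕ} {ξ τ : ℝ} (hc : 1 ≤ c) (hξ : 0 < ξ) (hτ : 0 < τ) :
    Real.Gamma ((c:ℝ)*τ) * Real.Gamma (τ+ξ) / (Real.Gamma τ * Real.Gamma ((c:ℝ)*τ+ξ))
      = Real.exp (∑' k, myFk (c:ℝ) ξ k τ) := by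
  set C : ℝ := (c:ℝ) with hCd
  have hC1 : (1:ℝ) ≤ C := by rw [hCd]; exact_mod_cast hc
  have hCτ : 0 < C*τ := by nlinarith
  have hne : Real.Gamma τ * Real.Gamma (C*τ+ξ) ≠ 0 :=
    (mul_pos (Real.Gamma_pos_of_pos hτ) (Real.Gamma_pos_of_pos (by linarith))).ne'
  have t1 : Tendsto (fun n => Real.GammaSeq (C*τ) n * Real.GammaSeq (τ+ξ) n
      / (Real.GammaSeq τ n * Real.GammaSeq (C*τ+ξ) n)) atTop
      (𝓝 (Real.Gamma (C*τ) * Real.Gamma (τ+ξ) / (Real.Gamma τ * Real.Gamma (C*τ+ξ)))) :=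
    ((Real.GammaSeq_tendsto_Gamma (C*τ)).mul (Real.GammaSeq_tendsto_Gamma (τ+ξ))).div
      ((Real.GammaSeq_tendsto_Gamma τ).mul (Real.GammaSeq_tendsto_Gamma (C*τ+ξ))) hne
  have hsum := summable_myFk hC1 hξ hτ
  have ht : Tendsto (fun n => Real.exp (∑ k ∈ range n, myFk C ξ k τ)) atTop
      (𝓝 (Real.exp (∑' k, myFk C ξ k τ))) :=
    (Real.continuous_exp.continuousAt.tendsto).comp hsum.hasSum.tendsto_sum_nat
  have ht2 : Tendsto (fun n : ℕ => Real.exp (∑ k ∈ range (n+1), myFk C ξ k τ)) atTop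
      (𝓝 (Real.exp (∑' k, myFk C ξ k τ))) := ht.comp (tendsto_add_atTop_nat 1)
  have heqv : ∀ᶠ n : ℕ in atTop, Real.exp (∑ k ∈ range (n+1), myFk C ξ k τ)
      = Real.GammaSeq (C*τ) n * Real.GammaSeq (τ+ξ) n
        / (Real.GammaSeq τ n * Real.GammaSeq (C*τ+ξ) n) := by
    filter_upwards [eventually_ge_atTop 1] with n hn
    rw [myExpSum_eq hC1 hξ hτ n, myGammaSeq_eq hc hξ hτ hn]
  exact (tendsto_nhds_unique (ht2.congr' heqv) t1).symm

theorem stmt_7 (h : ℕ) (hh : 1 ≤ h) (ξ : ℝ) (hξ : 1 ≤ ξ) :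
    (1 < ξ → StrictAntiOn
      (fun τ : ℝ => Real.Gamma (((h : ℝ) + 1) * τ) * Real.Gamma (τ + ξ)
        / (Real.Gamma τ * Real.Gamma (((h : ℝ) + 1) * τ + ξ))) (Set.Ioi 0)) ∧
    (ξ = 1 → ∀ τ₁ ∈ Set.Ioi (0:ℝ), ∀ τ₂ ∈ Set.Ioi (0:ℝ),
      Real.Gamma (((h : ℝ) + 1) * τ₁) * Real.Gamma (τ₁ + ξ)
        / (Real.Gamma τ₁ * Real.Gamma (((h : ℝ) + 1) * τ₁ + ξ))
      = Real.Gamma (((h : ℝ) + 1) * τ₂) * Real.Gamma (τ₂ + ξ)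
        / (Real.Gamma τ₂ * Real.Gamma (((h : ℝ) + 1) * τ₂ + ξ))) := by
  have hcast : ((h:ℝ) + 1) = (((h+1 : ℕ)):ℝ) := by push_cast; ring
  constructor
  · intro hξ1
    have hξ0 : (0:ℝ) < ξ := by linarith
    have hc2 : 2 ≤ h + 1 := by omega
    have hC1 : (1:ℝ) ≤ (((h+1 : ℕ)):ℝ) := by exact_mod_cast Nat.one_le_of_lt hc2
    have hfun : ∀ τ : ℝ, 0 < τ →
        Real.Gamma (((h:ℝ) + 1) * τ) * Real.Gamma (τ + ξ)
          / (Real.Gamma τ * Real.Gamma (((h:ℝ) + 1) * τ + ξ))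
        = Real.exp (∑' k, myFk (((h+1 : ℕ)):ℝ) ξ k τ) := by
      intro τ hτ
      rw [hcast]
      exact myGamma_eq_exp (by omega) hξ0 hτ
    have hg : StrictAntiOn (fun τ : ℝ => ∑' k, myFk (((h+1 : ℕ)):ℝ) ξ k τ) (Set.Ioi 0) := by
      apply strictAntiOn_of_deriv_neg (convex_Ioi 0)
      · intro x hx
        exact (hasDerivAt_myg hC1 hξ0 hx).continuousAt.continuousWithinAt
      · rw [interior_Ioi]
        intro x hx
        rw [(hasDerivAt_myg hC1 hξ0 hx).deriv]
        exact myTsumFk'_neg hc2 hξ1 hx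
    intro τ₁ h1 τ₂ h2 hlt
    rw [Set.mem_Ioi] at h1 h2
    show Real.Gamma (((h:ℝ) + 1) * τ₂) * Real.Gamma (τ₂ + ξ)
        / (Real.Gamma τ₂ * Real.Gamma (((h:ℝ) + 1) * τ₂ + ξ))
      < Real.Gamma (((h:ℝ) + 1) * τ₁) * Real.Gamma (τ₁ + ξ)
        / (Real.Gamma τ₁ * Real.Gamma (((h:ℝ) + 1) * τ₁ + ξ))
    rw [hfun τ₁ h1, hfun τ₂ h2]
    exact Real.exp_lt_exp.mpr (hg (Set.mem_Ioi.mpr h1) (Set.mem_Ioi.mpr h2) hlt)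
  · intro hξ1 τ₁ h1 τ₂ h2
    subst hξ1
    rw [Set.mem_Ioi] at h1 h2
    have key : ∀ τ : ℝ, 0 < τ →
        Real.Gamma (((h:ℝ) + 1) * τ) * Real.Gamma (τ + 1)
          / (Real.Gamma τ * Real.Gamma (((h:ℝ) + 1) * τ + 1)) = ((h:ℝ) + 1)⁻¹ := by
      intro τ hτ
      have hh1 : (0:ℝ) < (h:ℝ) + 1 := by positivity
      have hCτ : 0 < ((h:ℝ) + 1) * τ := by positivity
      rw [Real.Gamma_add_one hτ.ne', Real.Gamma_add_one hCτ.ne']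
      have g1 := Real.Gamma_pos_of_pos hτ
      have g2 := Real.Gamma_pos_of_pos hCτ
      field_simp
    rw [key τ₁ h1, key τ₂ h2]
end

section
/- For every positive integer h, real ξ ≥ 1, real τ > 0, and every j ∈ ℕ₀: 1/((j+τ+ξ)(j+τ+(ξ+h)/(h+1))) − (1/h)·Σ_{i=1}^{h} 1/((j+τ+i/(h+1))(j+τ+(ξ+i-1)/(h+1))) ≤ 1/((j+τ+ξ)(j+τ+(ξ+h)/(h+1))) − 1/((j+τ+1/2)(j+τ+(ξ-1)/(h+1)+1/2)), and the latter is negative when ξ > 1. -/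
lemma key_pair (a c x y : ℝ) (ha : 0 < a) (hc : 0 ≤ c) (hx : 0 < x) (hy : 0 < y)
    (hxy : x + y = 1) :
    2 / ((a + 1/2) * (a + 1/2 + c)) ≤
      1 / ((a + x) * (a + x + c)) + 1 / ((a + y) * (a + y + c)) := by
  have hy' : y = 1 - x := by linarith
  subst hy'
  have hu : 0 < a + x := by linarith
  have huc : 0 < a + x + c := by linarith
  have hv : 0 < a + (1-x) := by linarith
  have hvc : 0 < a + (1-x) + c := by linarith
  have hm : 0 < a + 1/2 := by linarith
  have hmc : 0 < a + 1/2 + c := by linarith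
  rw [div_add_div _ _ (by positivity) (by positivity),
    div_le_div_iff₀ (by positivity) (by positivity)]
  have hbr : 0 ≤ (a+1/2)*(a+1/2+c) + (a+1/2)^2 + (a+1/2+c)^2 - ((2*x-1)/2)^2 := by nlinarith
  have ident : (1 * ((a + (1-x)) * (a + (1-x) + c)) + (a + x) * (a + x + c) * 1)
        * ((a + 1/2) * (a + 1/2 + c))
      - 2 * ((a + x) * (a + x + c) * ((a + (1-x)) * (a + (1-x) + c)))
      = 2 * ((2*x-1)/2)^2
        * ((a+1/2)*(a+1/2+c) + (a+1/2)^2 + (a+1/2+c)^2 - ((2*x-1)/2)^2) := by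
    ring
  nlinarith [mul_nonneg (sq_nonneg ((2*x-1)/2)) hbr]

theorem stmt_8 (h : ℕ) (hh : 1 ≤ h) (ξ τ : ℝ) (hξ : 1 ≤ ξ) (hτ : 0 < τ) (j : ℕ) :
    (1 / (((j : ℝ) + τ + ξ) * ((j : ℝ) + τ + (ξ + h) / ((h : ℝ) + 1)))
        - (1 / (h : ℝ)) * ∑ i ∈ Finset.Icc 1 h,
            1 / (((j : ℝ) + τ + (i : ℝ) / ((h : ℝ) + 1))
              * ((j : ℝ) + τ + (ξ + (i : ℝ) - 1) / ((h : ℝ) + 1)))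
      ≤ 1 / (((j : ℝ) + τ + ξ) * ((j : ℝ) + τ + (ξ + h) / ((h : ℝ) + 1)))
        - 1 / (((j : ℝ) + τ + 1 / 2) * ((j : ℝ) + τ + (ξ - 1) / ((h : ℝ) + 1) + 1 / 2))) ∧
    (1 < ξ →
      1 / (((j : ℝ) + τ + ξ) * ((j : ℝ) + τ + (ξ + h) / ((h : ℝ) + 1)))
        - 1 / (((j : ℝ) + τ + 1 / 2) * ((j : ℝ) + τ + (ξ - 1) / ((h : ℝ) + 1) + 1 / 2)) < 0) := by
  have ha : 0 < (j : ℝ) + τ := by positivity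
  have hH : (0:ℝ) < (h : ℝ) := by exact_mod_cast hh
  have hH1 : (0:ℝ) < (h : ℝ) + 1 := by linarith
  set a : ℝ := (j : ℝ) + τ with ha_def
  have hc : 0 ≤ (ξ - 1) / ((h : ℝ) + 1) := by
    apply div_nonneg <;> linarith
  set c : ℝ := (ξ - 1) / ((h : ℝ) + 1) with hc_def
  set f : ℕ → ℝ := fun i =>
    1 / ((a + (i : ℝ) / ((h : ℝ) + 1)) * (a + (ξ + (i : ℝ) - 1) / ((h : ℝ) + 1))) with hf
  set B : ℝ := 1 / ((a + 1 / 2) * (a + c + 1 / 2)) with hB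
  constructor
  · apply sub_le_sub_left
    rw [show (1/(h:ℝ)) * (∑ i ∈ Finset.Icc 1 h, f i) = (∑ i ∈ Finset.Icc 1 h, f i) / h
        from by ring, le_div_iff₀ hH]
    -- reflection
    have refl : ∑ i ∈ Finset.Icc 1 h, f i = ∑ i ∈ Finset.Icc 1 h, f (h + 1 - i) := by
      refine Finset.sum_nbij' (i := fun i => h + 1 - i) (j := fun i => h + 1 - i)
        ?_ ?_ ?_ ?_ ?_ <;> simp only [Finset.mem_Icc] <;> intros
      · omega
      · omega
      · omega
      · omega
      · congr 1; omega
    have point : ∀ i ∈ Finset.Icc 1 h, 2 * B ≤ f i + f (h + 1 - i) := by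
      intro i hi
      rw [Finset.mem_Icc] at hi
      have hi1 : 1 ≤ i := hi.1
      have hi2 : i ≤ h := hi.2
      have hiR : (1:ℝ) ≤ (i:ℝ) := by exact_mod_cast hi1
      have hiR2 : (i:ℝ) ≤ (h:ℝ) := by exact_mod_cast hi2
      have hcast : ((h + 1 - i : ℕ) : ℝ) = (h : ℝ) + 1 - (i : ℝ) := by
        have : i ≤ h + 1 := by omega
        push_cast [Nat.cast_sub this]
        ring
      have hx : 0 < (i : ℝ) / ((h : ℝ) + 1) := by positivity
      have hy : 0 < ((h : ℝ) + 1 - (i : ℝ)) / ((h : ℝ) + 1) := by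
        apply div_pos <;> linarith
      have hxy : (i : ℝ) / ((h : ℝ) + 1) + ((h : ℝ) + 1 - (i : ℝ)) / ((h : ℝ) + 1) = 1 := by
        field_simp
        ring
      have key := key_pair a c ((i : ℝ) / ((h : ℝ) + 1)) (((h : ℝ) + 1 - (i : ℝ)) / ((h : ℝ) + 1))
        ha hc hx hy hxy
      have e1 : f i = 1 / ((a + (i : ℝ) / ((h : ℝ) + 1)) * (a + (i : ℝ) / ((h : ℝ) + 1) + c)) := by
        rw [hf]
        simp only []
        rw [hc_def]
        ring_nf
      have e2 : f (h + 1 - i) = 1 / ((a + ((h : ℝ) + 1 - (i : ℝ)) / ((h : ℝ) + 1))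
          * (a + ((h : ℝ) + 1 - (i : ℝ)) / ((h : ℝ) + 1) + c)) := by
        rw [hf]
        simp only [hcast]
        rw [hc_def]
        ring_nf
      have e3 : 2 * B = 2 / ((a + 1/2) * (a + 1/2 + c)) := by
        rw [hB]; ring_nf
      rw [e1, e2, e3]
      exact key
    have sum_bound : ∑ i ∈ Finset.Icc 1 h, (2 * B) ≤
        ∑ i ∈ Finset.Icc 1 h, (f i + f (h + 1 - i)) :=
      Finset.sum_le_sum point
    rw [Finset.sum_const, Nat.card_Icc, Finset.sum_add_distrib, ← refl] at sum_bound
    have hcard : ((h + 1 - 1 : ℕ) : ℝ) = (h : ℝ) := by push_cast; ring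
    rw [nsmul_eq_mul, hcard] at sum_bound
    linarith
  · intro hξ1
    have hQ : 0 < (a + 1/2) * (a + c + 1/2) := by positivity
    have hstep : (ξ + (h:ℝ)) / ((h : ℝ) + 1) = c + 1 := by
      rw [hc_def]; field_simp; ring
    have hlt : (a + 1/2) * (a + c + 1/2) < (a + ξ) * (a + (ξ + (h:ℝ)) / ((h : ℝ) + 1)) := by
      rw [hstep]
      apply mul_lt_mul' (by linarith) (by linarith) (by linarith) (by linarith)
    have := one_div_lt_one_div_of_lt hQ hlt
    linarith
end

section
/- For positive reals k, l, c, the function f(ζ) = ζ(ζ+l) ∫₀¹ (1-ρ)^{ζ+l-1} (1 − 1/(1+cρ)^{k+l}) dρ is strictly increasing in ζ ∈ (0,∞). -/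
open MeasureTheory Set

namespace Stmt9Aux

/-- The fixed decreasing weight function. -/
noncomputable def Psi (k l c x : ℝ) : ℝ :=
  (k + l) * c * ((1 - x) ^ (l + 1) * (1 + c * x) ^ (-(k + l) - 1))

lemma psi_pos {k l c : ℝ} (hk : 0 < k) (hl : 0 < l) (hc : 0 < c) {x : ℝ}
    (hx0 : 0 ≤ x) (hx1 : x < 1) : 0 < Psi k l c x := by
  have h1 : (0:ℝ) < 1 - x := by linarith
  have h2 : (0:ℝ) < 1 + c * x := by nlinarith
  have := Real.rpow_pos_of_pos h1 (l + 1)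
  have := Real.rpow_pos_of_pos h2 (-(k + l) - 1)
  unfold Psi
  positivity

lemma psi_anti {k l c : ℝ} (hk : 0 < k) (hl : 0 < l) (hc : 0 < c) {x y : ℝ}
    (hx0 : 0 ≤ x) (hxy : x < y) (hy1 : y < 1) : Psi k l c y < Psi k l c x := by
  have h1y : (0:ℝ) < 1 - y := by linarith
  have h1x : (0:ℝ) < 1 - x := by linarith
  have h2x : (0:ℝ) < 1 + c * x := by nlinarith
  have h2y : (0:ℝ) < 1 + c * y := by nlinarith
  have ha : (1 - y) ^ (l + 1) < (1 - x) ^ (l + 1) :=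
    Real.rpow_lt_rpow h1y.le (by linarith) (by linarith)
  have hb : (1 + c * y) ^ (-(k + l) - 1) < (1 + c * x) ^ (-(k + l) - 1) :=
    Real.rpow_lt_rpow_of_neg h2x (by nlinarith) (by linarith)
  have hprod : (1 - y) ^ (l + 1) * (1 + c * y) ^ (-(k + l) - 1)
      < (1 - x) ^ (l + 1) * (1 + c * x) ^ (-(k + l) - 1) :=
    mul_lt_mul'' ha hb (Real.rpow_pos_of_pos h1y _).le (Real.rpow_pos_of_pos h2y _).le
  exact mul_lt_mul_of_pos_left hprod (by positivity)

lemma integ_rpow_sub {b : ℝ} (hb : -1 < b) :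
    IntegrableOn (fun s : ℝ => (1 - s) ^ b) (Ioo (0:ℝ) 1) := by
  have h1 : IntervalIntegrable (fun x : ℝ => x ^ b) volume 0 1 :=
    intervalIntegral.intervalIntegrable_rpow' hb
  have h2 := (h1.comp_sub_left 1).symm
  simpa using (intervalIntegrable_iff_integrableOn_Ioo_of_le (by norm_num : (0:ℝ) ≤ 1)).mp
    (by simpa using h2)

lemma integral_rpow_sub {b : ℝ} (hb : -1 < b) :
    ∫ s in Ioo (0:ℝ) 1, (1 - s) ^ b = 1 / (b + 1) := by
  have h0 : ∫ s in Ioo (0:ℝ) 1, (1 - s) ^ b = ∫ s in (0:ℝ)..1, (1 - s) ^ b := by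
    rw [intervalIntegral.integral_of_le (by norm_num : (0:ℝ) ≤ 1),
      integral_Ioc_eq_integral_Ioo]
  rw [h0]
  have h1 := intervalIntegral.integral_comp_sub_left (a := (0:ℝ)) (b := 1)
    (fun x : ℝ => x ^ b) 1
  simp only [sub_self, sub_zero] at h1
  rw [h1, integral_rpow (Or.inl hb)]
  rw [Real.one_rpow, Real.zero_rpow (by linarith : b + 1 ≠ 0)]
  ring

/-- mass of the density `s ↦ ζ (1-s)^(ζ-1)` is 1. -/
lemma mass_one {ζ : ℝ} (hζ : 0 < ζ) :
    ∫ s in Ioo (0:ℝ) 1, ζ * (1 - s) ^ (ζ - 1) = 1 := by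
  rw [MeasureTheory.integral_const_mul, integral_rpow_sub (by linarith)]
  field_simp
  rw [sub_add_cancel, div_self hζ.ne']

lemma ibp {k l c : ℝ} (hk : 0 < k) (hl : 0 < l) (hc : 0 < c) {a : ℝ} (ha : 0 < a) :
    ∫ ρ in Ioo (0:ℝ) 1, a * ((1 - ρ) ^ (a - 1) * (1 - 1 / (1 + c * ρ) ^ (k + l)))
      = ∫ ρ in Ioo (0:ℝ) 1, (1 - ρ) ^ a * ((k + l) * c * (1 + c * ρ) ^ (-(k + l) - 1)) := by
  set v : ℝ → ℝ := fun ρ => 1 - 1 / (1 + c * ρ) ^ (k + l) with hv_def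
  set u : ℝ → ℝ := fun ρ => (1 - ρ) ^ a with hu_def
  set G : ℝ → ℝ := fun ρ => (k + l) * c * (1 + c * ρ) ^ (-(k + l) - 1) with hG_def
  set W : ℝ → ℝ := fun ρ => -(u ρ * v ρ) with hW_def
  set Wd : ℝ → ℝ := fun ρ => a * ((1 - ρ) ^ (a - 1) * v ρ) - u ρ * G ρ with hWd_def
  -- continuity facts
  have hu_cont : Continuous u :=
    (continuous_const.sub continuous_id).rpow_const (fun x => Or.inr ha.le)
  have hbase_pos : ∀ x ∈ Icc (0:ℝ) 1, (0:ℝ) < 1 + c * x := by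
    intro x hx; nlinarith [hx.1]
  have hbc : ContinuousOn (fun ρ : ℝ => (1 + c * ρ) ^ (k + l)) (Icc 0 1) := by
    apply ContinuousOn.rpow_const (by fun_prop)
    exact fun x hx => Or.inl (ne_of_gt (hbase_pos x hx))
  have hv_cont : ContinuousOn v (Icc 0 1) := by
    apply continuousOn_const.sub
    exact continuousOn_const.div hbc
      (fun x hx => ne_of_gt (Real.rpow_pos_of_pos (hbase_pos x hx) _))
  have hG_cont : ContinuousOn G (Icc 0 1) := by
    apply continuousOn_const.mul
    apply ContinuousOn.rpow_const (by fun_prop)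
    exact fun x hx => Or.inl (ne_of_gt (hbase_pos x hx))
  -- derivative
  have hW : ∀ ρ ∈ Ioo (0:ℝ) 1, HasDerivAt W (Wd ρ) ρ := by
    intro ρ hρ
    have h1ρ : (0:ℝ) < 1 - ρ := by linarith [hρ.2]
    have h2ρ : (0:ℝ) < 1 + c * ρ := by nlinarith [hρ.1]
    have hu : HasDerivAt u (-1 * a * (1 - ρ) ^ (a - 1)) ρ := by
      simpa [hu_def] using HasDerivAt.rpow_const (p := a)
        ((hasDerivAt_id ρ).const_sub 1) (Or.inl h1ρ.ne')
    have hbase : HasDerivAt (fun x : ℝ => 1 + c * x) c ρ := by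
      simpa using ((hasDerivAt_id ρ).const_mul c).const_add 1
    have hpow : HasDerivAt (fun x : ℝ => (1 + c * x) ^ (k + l))
        (c * (k + l) * (1 + c * ρ) ^ (k + l - 1)) ρ :=
      hbase.rpow_const (Or.inl h2ρ.ne')
    have hne : ((1 + c * ρ) ^ (k + l) : ℝ) ≠ 0 := ne_of_gt (Real.rpow_pos_of_pos h2ρ _)
    have hinv := hpow.inv hne
    have hv : HasDerivAt v (G ρ) ρ := by
      have hv0 := hinv.const_sub 1
      have hG_eq : -(-(c * (k + l) * (1 + c * ρ) ^ (k + l - 1)) /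
          ((1 + c * ρ) ^ (k + l)) ^ 2) = G ρ := by
        have e : (1 + c * ρ) ^ (-(k + l) - 1)
            = (1 + c * ρ) ^ (k + l - 1) / ((1 + c * ρ) ^ (k + l) * (1 + c * ρ) ^ (k + l)) := by
          rw [← Real.rpow_add h2ρ, ← Real.rpow_sub h2ρ]
          ring_nf
        simp only [hG_def, e, sq]
        ring
      have : v = fun x : ℝ => 1 - ((1 + c * x) ^ (k + l))⁻¹ := by
        funext x; simp [hv_def, one_div]
      rw [this, ← hG_eq]
      exact hv0
    have := (hu.mul hv).neg
    convert this using 1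
    · rfl
    · rfl
    · rfl
    simp only [hWd_def, hu_def]
    ring
  -- integrability
  have hv_bdd : ∀ x ∈ Ioo (0:ℝ) 1, ‖v x‖ ≤ 1 := by
    intro x hx
    have h2x : (0:ℝ) < 1 + c * x := by nlinarith [hx.1]
    have h1le : (1:ℝ) ≤ (1 + c * x) ^ (k + l) :=
      Real.one_le_rpow (by nlinarith [hx.1]) (by nlinarith)
    have hpos : (0:ℝ) < (1 + c * x) ^ (k + l) := Real.rpow_pos_of_pos h2x _
    rw [Real.norm_eq_abs, abs_le]
    constructor
    · have : 1 / (1 + c * x) ^ (k + l) ≤ 1 := by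
        rw [div_le_one hpos]; exact h1le
      simp only [hv_def]; nlinarith
    · have : 0 < 1 / (1 + c * x) ^ (k + l) := by positivity
      simp only [hv_def]; nlinarith
  have hv_meas : AEStronglyMeasurable v (volume.restrict (Ioo (0:ℝ) 1)) :=
    (hv_cont.mono Ioo_subset_Icc_self).aestronglyMeasurable measurableSet_Ioo
  have part1 : IntegrableOn (fun ρ => a * ((1 - ρ) ^ (a - 1) * v ρ)) (Ioo (0:ℝ) 1) := by
    have hbase_int : IntegrableOn (fun s : ℝ => (1 - s) ^ (a - 1)) (Ioo (0:ℝ) 1) :=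
      integ_rpow_sub (by linarith)
    have := (hbase_int.bdd_mul (c := 1) hv_meas
      ((ae_restrict_iff' measurableSet_Ioo).2 (ae_of_all _ hv_bdd)))
    exact (this.const_mul a).congr (ae_of_all _ (fun x => by simp only; ring))
  have part2 : IntegrableOn (fun ρ => u ρ * G ρ) (Ioo (0:ℝ) 1) :=
    ((hu_cont.continuousOn.mul hG_cont).integrableOn_Icc).mono_set Ioo_subset_Icc_self
  have hint : IntervalIntegrable Wd volume 0 1 := by
    rw [intervalIntegrable_iff_integrableOn_Ioo_of_le (by norm_num : (0:ℝ) ≤ 1)]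
    exact part1.sub part2
  -- FTC
  have hcont : ContinuousOn W (Icc 0 1) := ((hu_cont.continuousOn.mul hv_cont)).neg
  have h0 := intervalIntegral.integral_eq_sub_of_hasDeriv_right_of_le (by norm_num)
    hcont (fun x hx => (hW x hx).hasDerivWithinAt) hint
  have hW1 : W 1 = 0 := by
    simp [hW_def, hu_def, Real.zero_rpow ha.ne']
  have hW0 : W 0 = 0 := by
    simp [hW_def, hu_def, hv_def, Real.one_rpow]
  rw [hW1, hW0, sub_zero] at h0
  have h0' : ∫ ρ in Ioo (0:ℝ) 1, Wd ρ = 0 := by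
    rw [← integral_Ioc_eq_integral_Ioo,
      ← intervalIntegral.integral_of_le (by norm_num : (0:ℝ) ≤ 1)]
    exact h0
  have hsub := integral_sub part1 part2
  have h00 : (∫ ρ in Ioo (0:ℝ) 1, (a * ((1 - ρ) ^ (a - 1) * v ρ) - u ρ * G ρ)) = 0 := h0'
  rw [h00] at hsub
  simp only [hv_def, hu_def, hG_def] at hsub
  linarith [hsub]


lemma psi_contOn {k l c : ℝ} (hl : 0 < l) (hc : 0 < c) : ContinuousOn (Psi k l c) (Icc 0 1) := by
  unfold Psi
  apply continuousOn_const.mul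
  apply ContinuousOn.mul
  · exact ((continuous_const.sub continuous_id).rpow_const
      (fun x => Or.inr (by linarith))).continuousOn
  · apply ContinuousOn.rpow_const (by fun_prop)
    exact fun x hx => Or.inl (by nlinarith [hx.1] : (1:ℝ) + c * x ≠ 0)

lemma repr_eq {k l c : ℝ} (hk : 0 < k) (hl : 0 < l) (hc : 0 < c) {ζ : ℝ} (hζ : 0 < ζ) :
    ζ * (ζ + l) * ∫ ρ in Ioo (0:ℝ) 1, (1 - ρ) ^ (ζ + l - 1) * (1 - 1 / (1 + c * ρ) ^ (k + l))
      = ∫ s in Ioo (0:ℝ) 1, (ζ * (1 - s) ^ (ζ - 1)) * Psi k l c s := by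
  have ha : 0 < ζ + l := by linarith
  have step1 : ζ * (ζ + l) *
      ∫ ρ in Ioo (0:ℝ) 1, (1 - ρ) ^ (ζ + l - 1) * (1 - 1 / (1 + c * ρ) ^ (k + l))
      = ζ * ∫ ρ in Ioo (0:ℝ) 1,
          (ζ + l) * ((1 - ρ) ^ (ζ + l - 1) * (1 - 1 / (1 + c * ρ) ^ (k + l))) := by
    rw [MeasureTheory.integral_const_mul]; ring
  rw [step1, ibp hk hl hc ha, ← MeasureTheory.integral_const_mul]
  apply setIntegral_congr_fun measurableSet_Ioo
  intro s hs
  have h1s : (0:ℝ) < 1 - s := by linarith [hs.2]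
  have hsplit : (1 - s) ^ (ζ + l) = (1 - s) ^ (ζ - 1) * (1 - s) ^ (l + 1) := by
    rw [← Real.rpow_add h1s]; ring_nf
  simp only [Psi, hsplit]
  ring

end Stmt9Aux

open Stmt9Aux in
theorem stmt_9 (k l c : ℝ) (hk : 0 < k) (hl : 0 < l) (hc : 0 < c) :
    StrictMonoOn
      (fun ζ : ℝ => ζ * (ζ + l) *
        ∫ ρ in Set.Ioo (0:ℝ) 1, (1 - ρ) ^ (ζ + l - 1) * (1 - 1 / (1 + c * ρ) ^ (k + l)))
      (Set.Ioi 0) := by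
  intro ζ₁ hζ₁ ζ₂ hζ₂ hlt
  simp only [mem_Ioi] at hζ₁ hζ₂
  set δ : ℝ := ζ₂ - ζ₁ with hδ_def
  have hδ : 0 < δ := by simp [hδ_def]; linarith
  set r : ℝ := (ζ₁ / ζ₂) ^ δ⁻¹ with hr_def
  have hq0 : 0 < ζ₁ / ζ₂ := div_pos hζ₁ hζ₂
  have hq1 : ζ₁ / ζ₂ < 1 := (div_lt_one hζ₂).2 hlt
  have hr0 : 0 < r := Real.rpow_pos_of_pos hq0 _
  have hr1 : r < 1 := Real.rpow_lt_one hq0.le hq1 (by positivity)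
  have hrδ : r ^ δ = ζ₁ / ζ₂ := by
    rw [hr_def, ← Real.rpow_mul hq0.le, inv_mul_cancel₀ hδ.ne', Real.rpow_one]
  set x₀ : ℝ := 1 - r with hx₀_def
  have hx₀0 : 0 < x₀ := by simp [hx₀_def]; linarith
  have hx₀1 : x₀ < 1 := by simp [hx₀_def]; linarith
  -- the densities
  set P : ℝ → ℝ → ℝ := fun ζ s => ζ * (1 - s) ^ (ζ - 1) with hP_def
  -- sign facts for the difference of densities
  have hDfac : ∀ s ∈ Ioo (0:ℝ) 1,
      P ζ₂ s - P ζ₁ s = (1 - s) ^ (ζ₁ - 1) * (ζ₂ * (1 - s) ^ δ - ζ₁) := by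
    intro s hs
    have h1s : (0:ℝ) < 1 - s := by linarith [hs.2]
    have : (1 - s) ^ (ζ₂ - 1) = (1 - s) ^ (ζ₁ - 1) * (1 - s) ^ δ := by
      rw [← Real.rpow_add h1s, hδ_def]; ring_nf
    simp only [hP_def, this]; ring
  have hDpos : ∀ s ∈ Ioo (0:ℝ) 1, s < x₀ → 0 < P ζ₂ s - P ζ₁ s := by
    intro s hs hsx
    have h1s : (0:ℝ) < 1 - s := by linarith [hs.2]
    have hrt : r < 1 - s := by simp only [hx₀_def] at hsx; linarith
    have : r ^ δ < (1 - s) ^ δ := Real.rpow_lt_rpow hr0.le hrt hδ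
    rw [hrδ] at this
    have h2 : ζ₁ < ζ₂ * (1 - s) ^ δ := by
      rw [div_lt_iff₀ hζ₂] at this; linarith [this]
    rw [hDfac s hs]
    have := Real.rpow_pos_of_pos h1s (ζ₁ - 1)
    nlinarith
  have hDneg : ∀ s ∈ Ioo (0:ℝ) 1, x₀ < s → P ζ₂ s - P ζ₁ s ≤ 0 := by
    intro s hs hsx
    have h1s : (0:ℝ) < 1 - s := by linarith [hs.2]
    have hrt : 1 - s < r := by simp only [hx₀_def] at hsx; linarith
    have : (1 - s) ^ δ < r ^ δ := Real.rpow_lt_rpow h1s.le hrt hδ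
    rw [hrδ] at this
    have h2 : ζ₂ * (1 - s) ^ δ < ζ₁ := by
      rw [lt_div_iff₀ hζ₂] at this; linarith [this]
    rw [hDfac s hs]
    have := Real.rpow_pos_of_pos h1s (ζ₁ - 1)
    nlinarith
  have hDzero : ∀ s ∈ Ioo (0:ℝ) 1, s = x₀ → P ζ₂ s - P ζ₁ s = 0 := by
    intro s hs hsx
    have h1s : (0:ℝ) < 1 - s := by linarith [hs.2]
    have hrt : 1 - s = r := by simp only [hx₀_def] at hsx; linarith
    rw [hDfac s hs, hrt, hrδ]
    have : ζ₂ * (ζ₁ / ζ₂) = ζ₁ := by field_simp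
    rw [this]; ring
  -- pointwise nonnegativity of the cross term
  have hnn : ∀ s ∈ Ioo (0:ℝ) 1,
      0 ≤ (P ζ₂ s - P ζ₁ s) * (Psi k l c s - Psi k l c x₀) := by
    intro s hs
    rcases lt_trichotomy s x₀ with h | h | h
    · have hD := hDpos s hs h
      have hΨ : Psi k l c x₀ < Psi k l c s := psi_anti hk hl hc hs.1.le h hx₀1
      nlinarith
    · rw [hDzero s hs h, zero_mul]
    · have hD := hDneg s hs h
      have hΨ : Psi k l c s < Psi k l c x₀ := psi_anti hk hl hc hx₀0.le h hs.2
      nlinarith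
  have hposOn : ∀ s ∈ Ioo (0:ℝ) x₀,
      0 < (P ζ₂ s - P ζ₁ s) * (Psi k l c s - Psi k l c x₀) := by
    intro s hs
    have hs' : s ∈ Ioo (0:ℝ) 1 := ⟨hs.1, lt_trans hs.2 hx₀1⟩
    have hD := hDpos s hs' hs.2
    have hΨ : Psi k l c x₀ < Psi k l c s := psi_anti hk hl hc hs'.1.le hs.2 hx₀1
    nlinarith
  -- integrability
  have hPint : ∀ ζ : ℝ, 0 < ζ → IntegrableOn (fun s => P ζ s) (Ioo (0:ℝ) 1) := by
    intro ζ hζ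
    exact (integ_rpow_sub (by linarith)).const_mul ζ
  have hΨbdd : ∃ C, ∀ x ∈ Icc (0:ℝ) 1, ‖Psi k l c x‖ ≤ C :=
    isCompact_Icc.exists_bound_of_continuousOn (psi_contOn hl hc)
  obtain ⟨C, hC⟩ := hΨbdd
  have hΨmeas : AEStronglyMeasurable (Psi k l c) (volume.restrict (Ioo (0:ℝ) 1)) :=
    ((psi_contOn hl hc).mono Ioo_subset_Icc_self).aestronglyMeasurable measurableSet_Ioo
  have hPΨint : ∀ ζ : ℝ, 0 < ζ →
      IntegrableOn (fun s => P ζ s * Psi k l c s) (Ioo (0:ℝ) 1) := by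
    intro ζ hζ
    have := (hPint ζ hζ).bdd_mul (c := C) hΨmeas
      ((ae_restrict_iff' measurableSet_Ioo).2
        (ae_of_all _ (fun x hx => hC x (Ioo_subset_Icc_self hx))))
    exact this.congr (ae_of_all _ (fun x => by ring))
  -- the cross integral is positive
  have i2 : IntegrableOn (fun s => P ζ₂ s * Psi k l c s) (Ioo (0:ℝ) 1) := hPΨint ζ₂ hζ₂
  have i1 : IntegrableOn (fun s => P ζ₁ s * Psi k l c s) (Ioo (0:ℝ) 1) := hPΨint ζ₁ hζ₁
  have j2 : IntegrableOn (fun s => Psi k l c x₀ * P ζ₂ s) (Ioo (0:ℝ) 1) :=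
    (hPint ζ₂ hζ₂).const_mul _
  have j1 : IntegrableOn (fun s => Psi k l c x₀ * P ζ₁ s) (Ioo (0:ℝ) 1) :=
    (hPint ζ₁ hζ₁).const_mul _
  have i21 : IntegrableOn (fun s => P ζ₂ s * Psi k l c s - P ζ₁ s * Psi k l c s)
      (Ioo (0:ℝ) 1) := i2.sub i1
  have j21 : IntegrableOn (fun s => Psi k l c x₀ * P ζ₂ s - Psi k l c x₀ * P ζ₁ s)
      (Ioo (0:ℝ) 1) := j2.sub j1
  have hcrossInt : IntegrableOn
      (fun s => (P ζ₂ s - P ζ₁ s) * (Psi k l c s - Psi k l c x₀)) (Ioo (0:ℝ) 1) := by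
    exact (i21.sub j21).congr (ae_of_all _ (fun x => by simp only [Pi.sub_apply]; ring))
  have hIpos : 0 < ∫ s in Ioo (0:ℝ) 1,
      (P ζ₂ s - P ζ₁ s) * (Psi k l c s - Psi k l c x₀) := by
    rw [setIntegral_pos_iff_support_of_nonneg_ae
      ((ae_restrict_iff' measurableSet_Ioo).2 (ae_of_all _ hnn)) hcrossInt]
    have hsub : Ioo (0:ℝ) x₀ ⊆
        (Function.support fun s => (P ζ₂ s - P ζ₁ s) * (Psi k l c s - Psi k l c x₀))
          ∩ Ioo (0:ℝ) 1 := by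
      intro s hs
      exact ⟨ne_of_gt (hposOn s hs), hs.1, lt_trans hs.2 hx₀1⟩
    calc (0:ENNReal) < volume (Ioo (0:ℝ) x₀) := by
          rw [Real.volume_Ioo]; simp [ENNReal.ofReal_pos]; linarith
      _ ≤ _ := measure_mono hsub
  -- expand the cross integral
  have hexp : ∫ s in Ioo (0:ℝ) 1, (P ζ₂ s - P ζ₁ s) * (Psi k l c s - Psi k l c x₀)
      = (∫ s in Ioo (0:ℝ) 1, P ζ₂ s * Psi k l c s)
        - (∫ s in Ioo (0:ℝ) 1, P ζ₁ s * Psi k l c s) := by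
    have e : ∀ s : ℝ, (P ζ₂ s - P ζ₁ s) * (Psi k l c s - Psi k l c x₀)
        = (P ζ₂ s * Psi k l c s - P ζ₁ s * Psi k l c s)
          - (Psi k l c x₀ * P ζ₂ s - Psi k l c x₀ * P ζ₁ s) := fun s => by ring
    rw [setIntegral_congr_fun measurableSet_Ioo (fun s _ => e s)]
    have m₂ : ∫ s in Ioo (0:ℝ) 1, P ζ₂ s = 1 := mass_one hζ₂
    have m₁ : ∫ s in Ioo (0:ℝ) 1, P ζ₁ s = 1 := mass_one hζ₁
    have jm₂ : ∫ s in Ioo (0:ℝ) 1, Psi k l c x₀ * P ζ₂ s = Psi k l c x₀ := by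
      rw [MeasureTheory.integral_const_mul, m₂, mul_one]
    have jm₁ : ∫ s in Ioo (0:ℝ) 1, Psi k l c x₀ * P ζ₁ s = Psi k l c x₀ := by
      rw [MeasureTheory.integral_const_mul, m₁, mul_one]
    rw [integral_sub i21 j21, integral_sub i2 i1, integral_sub j2 j1, jm₂, jm₁]
    ring
  rw [hexp] at hIpos
  have r₁ := repr_eq hk hl hc hζ₁ (k := k) (l := l) (c := c)
  have r₂ := repr_eq hk hl hc hζ₂ (k := k) (l := l) (c := c)
  simp only
  rw [r₁, r₂]
  simpa only [hP_def] using (sub_pos.mp (by linarith [hIpos]))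
end

section
/- Let m = p/2 for p = 2, i.e. m = 1. Then ∫₀¹ (1-ρ)^{m+1}/(mρ) · (1 − 1/(1+mρ)²) dρ = 1/(m+1). More generally, for any real m > 0, ∫₀¹ (1-ρ)^{m+1} · (1/(1+mρ) + 1/(1+mρ)²) dρ = 1/(m+1). -/
open MeasureTheory Set

lemma key_integral (m : ℝ) (hm : 0 < m) :
    ∫ ρ in Set.Ioo (0:ℝ) 1,
        (1 - ρ) ^ (m + 1) * (1 / (1 + m * ρ) + 1 / (1 + m * ρ) ^ (2:ℕ)) = 1 / (m + 1) := by
  set f : ℝ → ℝ := fun ρ => (1 - ρ) ^ (m + 1) * (1 / (1 + m * ρ) + 1 / (1 + m * ρ) ^ (2:ℕ))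
    with hf
  set F : ℝ → ℝ := fun ρ => -((1 - ρ) ^ (m + 2) / ((m + 1) * (1 + m * ρ))) with hF
  have hm1 : (0:ℝ) < m + 1 := by linarith
  have hden : ∀ x ∈ Icc (0:ℝ) 1, (0:ℝ) < 1 + m * x := by
    intro x hx
    nlinarith [hx.1, hx.2]
  have hderiv : ∀ x ∈ Set.uIcc (0:ℝ) 1, HasDerivAt F (f x) x := by
    intro x hx'
    rw [uIcc_of_le (by norm_num : (0:ℝ) ≤ 1)] at hx'
    have hx := hx'
    have h1x : (0:ℝ) ≤ 1 - x := by linarith [hx.2]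
    have hg : HasDerivAt (fun y : ℝ => (1 - y) ^ (m + 2))
        (-((m + 2) * (1 - x) ^ (m + 1))) x := by
      have hbase : HasDerivAt (fun y : ℝ => 1 - y) (-1) x := by
        simpa using (hasDerivAt_id x).const_sub 1
      have hr : HasDerivAt (fun t : ℝ => t ^ (m + 2))
          ((m + 2) * (1 - x) ^ (m + 2 - 1)) (1 - x) :=
        Real.hasDerivAt_rpow_const (Or.inr (by linarith))
      have := hr.comp x hbase
      have he : m + 2 - 1 = m + 1 := by ring
      rw [he] at this
      exact this.congr_deriv (by ring)
    have hh : HasDerivAt (fun y : ℝ => (m + 1) * (1 + m * y)) ((m + 1) * m) x := by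
      have : HasDerivAt (fun y : ℝ => 1 + m * y) m x := by
        simpa using ((hasDerivAt_id x).const_mul m).const_add 1
      simpa using this.const_mul (m + 1)
    have hne : (m + 1) * (1 + m * x) ≠ 0 := by
      have := hden x hx
      positivity
    have hdiv := (hg.div hh hne).neg
    refine hdiv.congr_deriv (Eq.symm ?_)
    rcases eq_or_lt_of_le hx.2 with h1 | h1
    · -- x = 1
      subst h1
      have : (0:ℝ) ^ (m + 1) = 0 := Real.zero_rpow (by linarith)
      have h2 : (0:ℝ) ^ (m + 2) = 0 := Real.zero_rpow (by linarith)
      simp [hf, this, h2]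
    · -- x < 1
      have hx1 : (0:ℝ) < 1 - x := by linarith
      have hsplit : (1 - x) ^ (m + 2) = (1 - x) ^ (m + 1) * (1 - x) := by
        rw [← Real.rpow_add_one (ne_of_gt hx1) (m + 1)]
        ring_nf
      have hd := hden x hx
      rw [hf]
      simp only [hsplit]
      field_simp
      ring
  have hcont : ContinuousOn f (Icc (0:ℝ) 1) := by
    apply ContinuousOn.mul
    · exact (continuousOn_const.sub continuousOn_id).rpow_const
        (fun x hx => Or.inr (by linarith))
    · apply ContinuousOn.add
      · exact continuousOn_const.div
          (continuousOn_const.add (continuousOn_const.mul continuousOn_id))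
          (fun x hx => ne_of_gt (hden x hx))
      · exact continuousOn_const.div
          ((continuousOn_const.add (continuousOn_const.mul continuousOn_id)).pow 2)
          (fun x hx => ne_of_gt (pow_pos (hden x hx) 2))
  have hint : IntervalIntegrable f volume 0 1 := by
    apply ContinuousOn.intervalIntegrable
    rwa [uIcc_of_le (by norm_num : (0:ℝ) ≤ 1)]
  have hIoo : ∫ ρ in Set.Ioo (0:ℝ) 1, f ρ = ∫ ρ in (0:ℝ)..1, f ρ := by
    rw [intervalIntegral.integral_of_le (by norm_num : (0:ℝ) ≤ 1),
      MeasureTheory.integral_Ioc_eq_integral_Ioo]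
  rw [hIoo, intervalIntegral.integral_eq_sub_of_hasDerivAt hderiv hint]
  have h10 : (1:ℝ) - 1 = 0 := by norm_num
  have hz : (0:ℝ) ^ (m + 2) = 0 := Real.zero_rpow (by linarith)
  have ho : (1:ℝ) ^ (m + 2) = 1 := Real.one_rpow _
  simp only [hF, h10, hz, ho]
  field_simp
  norm_num

theorem stmt_10 :
    (∫ ρ in Set.Ioo (0:ℝ) 1,
        (1 - ρ) ^ ((1:ℝ) + 1) / (1 * ρ) * (1 - 1 / (1 + 1 * ρ) ^ (2:ℕ)) = 1 / ((1:ℝ) + 1)) ∧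
    ∀ m : ℝ, 0 < m →
      ∫ ρ in Set.Ioo (0:ℝ) 1,
          (1 - ρ) ^ (m + 1) * (1 / (1 + m * ρ) + 1 / (1 + m * ρ) ^ (2:ℕ)) = 1 / (m + 1) := by
  constructor
  · have h := key_integral 1 one_pos
    rw [← h]
    apply MeasureTheory.setIntegral_congr_fun measurableSet_Ioo
    intro ρ hρ
    have h0 : (0:ℝ) < ρ := hρ.1
    have h1 : ρ < 1 := hρ.2
    have hd : (0:ℝ) < 1 + 1 * ρ := by linarith
    field_simp
    ring
  · exact fun m hm => key_integral m hm
end
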